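/- arXiv:2003.05205 — 9 statements merged into one kernel-verified Lean document; each statement's English description precedes it below -/
import Mathlib

section
/- Let q be a prime power and let f ∈ F_q[T][X] be a polynomial that is primitive (its coefficients in F_q[T] have no common irreducible factor) and irreducible as a polynomial in X over F_q(T), with deg_T f ≥ 1. If f splits completely over F_q((T)), then deg_X f ≤ (q+1)·deg_T f. (Equivalently: every nonconstant totally T-adic algebraic function over F_q(T) has height at least 1/(q+1).) -/
open Polynomial

/-- The `T`-degree of `f ∈ F[T][X]`: the maximal `T`-degree of its coefficients
(the variable of the inner polynomial ring plays the role of `T`). -/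
noncomputable def degT {F : Type*} [Field F] (f : Polynomial (Polynomial F)) : ℕ :=
  f.support.sup fun i => (f.coeff i).natDegree

/-- View `f ∈ F[T][X]` as a polynomial in `X` over the rational function field `F(T)`. -/
noncomputable def toRat {F : Type*} [Field F] (f : Polynomial (Polynomial F)) :
    Polynomial (RatFunc F) :=
  f.map (algebraMap (Polynomial F) (RatFunc F))

/-- `f ∈ F[T][X]` splits completely (into linear factors) over the
Laurent series field `F((T))`. -/
def SplitsCompletely {F : Type*} [Field F] (f : Polynomial (Polynomial F)) : Prop :=
  Polynomial.Splits (f.map (algebraMap (Polynomial F) (LaurentSeries F)))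

namespace TotallyTAdicAux

variable {F : Type*} [Field F]

/-- "order bounded below by `b` (or zero)" predicate on Laurent series. -/
def Bnd (b : ℤ) (x : LaurentSeries F) : Prop := x = 0 ∨ b ≤ x.order

lemma bnd_zero (b : ℤ) : Bnd b (0 : LaurentSeries F) := Or.inl rfl

lemma bnd_mono {b c : ℤ} (h : b ≤ c) {x : LaurentSeries F} (hx : Bnd c x) : Bnd b x :=
  hx.imp id (le_trans h)

lemma bnd_add {b : ℤ} {x y : LaurentSeries F} (hx : Bnd b x) (hy : Bnd b y) :
    Bnd b (x + y) := by
  rcases hx with rfl | hx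
  · simpa using hy
  rcases hy with rfl | hy
  · rw [add_zero]; exact Or.inr hx
  rcases eq_or_ne (x + y) 0 with h | h
  · exact Or.inl h
  · exact Or.inr (le_trans (le_min hx hy) (HahnSeries.min_order_le_order_add h))

lemma bnd_mul {b c : ℤ} {x y : LaurentSeries F} (hx : Bnd b x) (hy : Bnd c y) :
    Bnd (b + c) (x * y) := by
  rcases hx with rfl | hx
  · simp [bnd_zero]
  rcases hy with rfl | hy
  · simp [bnd_zero]
  rcases eq_or_ne x 0 with rfl | hx0
  · simp [bnd_zero]
  rcases eq_or_ne y 0 with rfl | hy0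
  · simp [bnd_zero]
  exact Or.inr (by rw [HahnSeries.order_mul hx0 hy0]; exact add_le_add hx hy)

lemma bnd_sum {b : ℤ} {ι : Type*} (s : Finset ι) (g : ι → LaurentSeries F)
    (h : ∀ i ∈ s, Bnd b (g i)) : Bnd b (∑ i ∈ s, g i) := by
  classical
  induction s using Finset.cons_induction with
  | empty => simpa using bnd_zero b
  | cons a s ha ih =>
    rw [Finset.sum_cons]
    exact bnd_add (h a (Finset.mem_cons_self a s))
      (ih fun i hi => h i (Finset.mem_cons_of_mem hi))

lemma bnd_of_ne {b : ℤ} {x : LaurentSeries F} (hx : x ≠ 0) (h : Bnd b x) : b ≤ x.order :=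
  h.resolve_left hx

/-- coefficient of the image of a polynomial in the Laurent series field -/
lemma coeff_algebraMap (a : Polynomial F) (i : ℤ) :
    (algebraMap (Polynomial F) (LaurentSeries F) a).coeff i
      = if i < 0 then 0 else a.coeff i.natAbs := by
  rw [Polynomial.algebraMap_hahnSeries_apply]
  have : (HahnSeries.ofPowerSeries ℤ F) (a : PowerSeries F)
      = ((a : PowerSeries F) : LaurentSeries F) := rfl
  rw [this, PowerSeries.coeff_coe]
  simp [Polynomial.coeff_coe]

lemma bnd_algebraMap (a : Polynomial F) :
    Bnd 0 (algebraMap (Polynomial F) (LaurentSeries F) a) := by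
  set x := algebraMap (Polynomial F) (LaurentSeries F) a with hx
  rcases eq_or_ne x 0 with h | h
  · exact Or.inl h
  refine Or.inr ?_
  by_contra hlt
  push_neg at hlt
  have := HahnSeries.coeff_order_eq_zero.not.mpr h
  rw [hx, coeff_algebraMap, if_pos hlt] at this
  exact this rfl

lemma order_algebraMap_le (a : Polynomial F) (ha : a ≠ 0) :
    (algebraMap (Polynomial F) (LaurentSeries F) a).order ≤ (a.natDegree : ℤ) := by
  apply HahnSeries.order_le_of_coeff_ne_zero
  rw [coeff_algebraMap, if_neg (not_lt.mpr (Int.natCast_nonneg _))]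
  simpa using Polynomial.leadingCoeff_ne_zero.mpr ha

lemma order_multiset_prod (S : Multiset (LaurentSeries F)) (h : (0 : LaurentSeries F) ∉ S) :
    S.prod.order = (S.map HahnSeries.order).sum := by
  induction S using Multiset.induction_on with
  | empty => simp [HahnSeries.order_one]
  | cons a s ih =>
    have ha : a ≠ 0 := fun hh => h (hh ▸ Multiset.mem_cons_self a s)
    have hs : (0 : LaurentSeries F) ∉ s := fun hh => h (Multiset.mem_cons_of_mem hh)
    have hsp : s.prod ≠ 0 := Multiset.prod_ne_zero hs
    rw [Multiset.prod_cons, HahnSeries.order_mul ha hsp, Multiset.map_cons, Multiset.sum_cons,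
      ih hs]

/-- The key coefficient identity used in the induction for the Newton-polygon lemma. -/
lemma key_coeff (h : Polynomial (LaurentSeries F)) (a : LaurentSeries F) (k : ℕ) :
    (-a) * h.coeff k * a ^ k
      = ∑ j ∈ Finset.range (k + 1), (h * (X - C a)).coeff j * a ^ j := by
  induction k with
  | zero => simp [Polynomial.mul_coeff_zero]; ring
  | succ k ih =>
    rw [Finset.sum_range_succ, ← ih, Polynomial.coeff_mul_X_sub_C]
    ring

/-- Newton polygon lemma: for an integral polynomial that splits, the order of the leading
coefficient plus the sum of negative parts of the orders of the roots is nonnegative. -/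
lemma lemA (S : Multiset (LaurentSeries F)) :
    ∀ lc : LaurentSeries F, lc ≠ 0 →
    (∀ k : ℕ, Bnd 0 ((C lc * (S.map fun a => X - C a).prod).coeff k)) →
    0 ≤ lc.order + (S.map fun a => min a.order 0).sum := by
  induction S using Multiset.strongInductionOn with
  | _ S ih =>
    intro lc hlc hq
    classical
    by_cases hall : ∀ a ∈ S, 0 ≤ a.order
    · have hsum : (S.map fun a => min a.order 0).sum = 0 := by
        apply Multiset.sum_eq_zero
        intro x hx
        obtain ⟨a, ha, rfl⟩ := Multiset.mem_map.mp hx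
        simpa using hall a ha
      rw [hsum, add_zero]
      -- leading coefficient is `lc`
      have hmon : ((S.map fun a => X - C a).prod).Monic :=
        monic_multiset_prod_of_monic _ _ fun p _ => monic_X_sub_C p
      have hdeg : ((S.map fun a => X - C a).prod).natDegree = Multiset.card S := by
        rw [natDegree_multiset_prod_of_monic]
        · simp [Multiset.map_map, Function.comp_def]
        · intro p hp
          obtain ⟨a, _, rfl⟩ := Multiset.mem_map.mp hp
          exact monic_X_sub_C a
      have hc := hq (Multiset.card S)
      rw [Polynomial.coeff_C_mul, ← hdeg, ← Polynomial.leadingCoeff, hmon.leadingCoeff,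
        mul_one] at hc
      exact bnd_of_ne hlc hc
    · push_neg at hall
      obtain ⟨a, haS, hneg⟩ := hall
      have ha0 : a ≠ 0 := by
        intro h; rw [h, HahnSeries.order_zero] at hneg; exact lt_irrefl 0 hneg
      set S' := S.erase a with hS'
      have hcons : S = a ::ₘ S' := (Multiset.cons_erase haS).symm
      set h₀ : Polynomial (LaurentSeries F) := C lc * (S'.map fun b => X - C b).prod with hh₀
      have hfac : C lc * (S.map fun b => X - C b).prod = h₀ * (X - C a) := by
        rw [hcons, Multiset.map_cons, Multiset.prod_cons, hh₀]
        exact mul_left_comm (C lc) (X - C a) _ |>.trans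
          (by rw [mul_comm (X - C a), mul_assoc])
      -- integrality of the coefficients of `C (-a * lc) * prod S'`
      have hint : ∀ k : ℕ, Bnd 0 ((C ((-a) * lc) * (S'.map fun b => X - C b).prod).coeff k) := by
        intro k
        have hco : (C ((-a) * lc) * (S'.map fun b => X - C b).prod).coeff k
            = (-a) * h₀.coeff k := by
          simp only [hh₀, Polynomial.C_mul, mul_assoc, Polynomial.coeff_C_mul]
        rw [hco]
        rcases eq_or_ne (h₀.coeff k) 0 with hz | hz
        · rw [hz, mul_zero]; exact bnd_zero 0
        have hkey := key_coeff h₀ a k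
        -- RHS is Bnd (k * a.order)
        have hrhs : Bnd ((k : ℤ) * a.order)
            (∑ j ∈ Finset.range (k + 1), (h₀ * (X - C a)).coeff j * a ^ j) := by
          apply bnd_sum
          intro j hj
          have hj' : j ≤ k := Nat.lt_succ_iff.mp (Finset.mem_range.mp hj)
          have h1 : Bnd 0 ((h₀ * (X - C a)).coeff j) := by
            rw [← hfac]; exact hq j
          have h2 : Bnd ((j : ℤ) * a.order) (a ^ j) :=
            Or.inr (le_of_eq (by rw [HahnSeries.order_pow, nsmul_eq_mul]))
          have := bnd_mul h1 h2
          rw [zero_add] at this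
          refine bnd_mono ?_ this
          have : (j : ℤ) ≤ (k : ℤ) := by exact_mod_cast hj'
          nlinarith [hneg]
        rw [← hkey] at hrhs
        have hlhs0 : (-a) * h₀.coeff k * a ^ k ≠ 0 := by
          apply mul_ne_zero (mul_ne_zero (neg_ne_zero.mpr ha0) hz) (pow_ne_zero _ ha0)
        have := bnd_of_ne hlhs0 hrhs
        rw [HahnSeries.order_mul (mul_ne_zero (neg_ne_zero.mpr ha0) hz) (pow_ne_zero _ ha0),
          HahnSeries.order_pow] at this
        refine Or.inr ?_
        rw [nsmul_eq_mul] at this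
        linarith
      have hlt : S' < S := by
        rw [hcons]; exact Multiset.lt_cons_self S' a
      have hrec := ih S' hlt ((-a) * lc) (mul_ne_zero (neg_ne_zero.mpr ha0) hlc) hint
      have horder : ((-a) * lc).order = a.order + lc.order := by
        rw [HahnSeries.order_mul (neg_ne_zero.mpr ha0) hlc, HahnSeries.order_neg]
      have hsplit : (S.map fun b => min b.order 0).sum
          = min a.order 0 + (S'.map fun b => min b.order 0).sum := by
        rw [hcons, Multiset.map_cons, Multiset.sum_cons]
      rw [hsplit, min_eq_left hneg.le]
      rw [horder] at hrec
      linarith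

/-- order of `x - α` for a Laurent series `α` of negative order and integral `x`. -/
lemma order_sub_of_neg {α : LaurentSeries F} (hα : α.order < 0) (x : LaurentSeries F)
    (hx : Bnd 0 x) : (x - α).order = α.order := by
  have hα0 : α ≠ 0 := by
    intro h; rw [h, HahnSeries.order_zero] at hα; exact lt_irrefl 0 hα
  have hcoeff : ∀ i : ℤ, i < 0 → (x - α).coeff i = -α.coeff i := by
    intro i hi
    have hxi : x.coeff i = 0 := by
      rcases hx with rfl | hx
      · simp
      · exact HahnSeries.coeff_eq_zero_of_lt_order (lt_of_lt_of_le hi hx)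
    rw [HahnSeries.coeff_sub, hxi, zero_sub]
  have hne : (x - α).coeff α.order ≠ 0 := by
    rw [hcoeff _ hα]
    exact neg_ne_zero.mpr (HahnSeries.coeff_order_eq_zero.not.mpr hα0)
  have hxa : x - α ≠ 0 := by
    intro h; rw [h] at hne; exact hne rfl
  refine le_antisymm (HahnSeries.order_le_of_coeff_ne_zero hne) ?_
  by_contra hlt
  push_neg at hlt
  have h0 := HahnSeries.coeff_order_eq_zero.not.mpr hxa
  rw [hcoeff _ (hlt.trans hα)] at h0
  exact h0 (by rw [HahnSeries.coeff_eq_zero_of_lt_order hlt, neg_zero])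


lemma bnd_neg {b : ℤ} {x : LaurentSeries F} (hx : Bnd b x) : Bnd b (-x) := by
  rcases hx with rfl | hx
  · simp [bnd_zero]
  rcases eq_or_ne x 0 with rfl | hx0
  · simp [bnd_zero]
  · exact Or.inr (by rwa [HahnSeries.order_neg])

lemma bnd_sub {b : ℤ} {x y : LaurentSeries F} (hx : Bnd b x) (hy : Bnd b y) :
    Bnd b (x - y) := by
  rw [sub_eq_add_neg]; exact bnd_add hx (bnd_neg hy)

/-- A Laurent series of nonnegative order minus its residue has order at least one. -/
lemma one_le_order_sub_resid {α : LaurentSeries F} (h0 : 0 ≤ α.order)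
    (hne : algebraMap (Polynomial F) (LaurentSeries F) (Polynomial.C (α.coeff 0)) - α ≠ 0) :
    1 ≤ (algebraMap (Polynomial F) (LaurentSeries F) (Polynomial.C (α.coeff 0)) - α).order := by
  set β := algebraMap (Polynomial F) (LaurentSeries F) (Polynomial.C (α.coeff 0)) - α with hβ
  have hcoeff : ∀ i : ℤ, i ≤ 0 → β.coeff i = 0 := by
    intro i hi
    rw [hβ, HahnSeries.coeff_sub, coeff_algebraMap]
    rcases lt_or_eq_of_le hi with hi' | hi'
    · rw [if_pos hi', HahnSeries.coeff_eq_zero_of_lt_order (lt_of_lt_of_le hi' h0), zero_sub,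
        neg_zero]
    · subst hi'
      simp
  by_contra hlt
  push_neg at hlt
  have h1 := HahnSeries.coeff_order_eq_zero.not.mpr hne
  exact h1 (hcoeff _ (by omega))

lemma one_le_sum_orders [Fintype F] {α : LaurentSeries F} (h0 : 0 ≤ α.order)
    (hne : ∀ c : F, algebraMap (Polynomial F) (LaurentSeries F) (Polynomial.C c) - α ≠ 0) :
    1 ≤ ∑ c : F, (algebraMap (Polynomial F) (LaurentSeries F) (Polynomial.C c) - α).order := by
  classical
  rw [← Finset.add_sum_erase _ _ (Finset.mem_univ (α.coeff 0))]
  have h1 : 1 ≤ (algebraMap (Polynomial F) (LaurentSeries F) (Polynomial.C (α.coeff 0))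
      - α).order := one_le_order_sub_resid h0 (hne _)
  have h2 : 0 ≤ ∑ c ∈ Finset.univ.erase (α.coeff 0),
      (algebraMap (Polynomial F) (LaurentSeries F) (Polynomial.C c) - α).order := by
    apply Finset.sum_nonneg
    intro c _
    exact bnd_of_ne (hne c) (bnd_sub (bnd_algebraMap _) (Or.inr h0))
  omega

lemma multiset_sum_comm {ι : Type*} (s : Finset ι) (R : Multiset (LaurentSeries F))
    (u : ι → LaurentSeries F → ℤ) :
    (R.map fun α => ∑ c ∈ s, u c α).sum = ∑ c ∈ s, (R.map (u c)).sum := by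
  induction R using Multiset.induction_on with
  | empty => simp
  | cons a r ih => simp [Multiset.map_cons, Multiset.sum_cons, ih, Finset.sum_add_distrib]

lemma order_finset_prod {ι : Type*} (s : Finset ι) (u : ι → LaurentSeries F)
    (h : ∀ i ∈ s, u i ≠ 0) :
    (∏ i ∈ s, u i).order = ∑ i ∈ s, (u i).order := by
  classical
  induction s using Finset.cons_induction with
  | empty => simp [HahnSeries.order_one]
  | cons a s ha ih =>
    rw [Finset.prod_cons, Finset.sum_cons,
      HahnSeries.order_mul (h a (Finset.mem_cons_self a s))
        (Finset.prod_ne_zero_iff.mpr fun i hi => h i (Finset.mem_cons_of_mem hi)),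
      ih fun i hi => h i (Finset.mem_cons_of_mem hi)]

lemma card_le_sum_map {R : Multiset (LaurentSeries F)} {w : LaurentSeries F → ℤ}
    (h : ∀ a ∈ R, 1 ≤ w a) : (Multiset.card R : ℤ) ≤ (R.map w).sum := by
  have := Multiset.card_nsmul_le_sum (s := R.map w) (a := (1 : ℤ)) (by
    intro x hx
    obtain ⟨a, ha, rfl⟩ := Multiset.mem_map.mp hx
    exact h a ha)
  simpa using this

end TotallyTAdicAux

/-- A nonconstant totally $T$-adic algebraic function over $F_q(T)$ has height at
least $1/(q+1)$: if $f ∈ F_q[T][X]$ is primitive, irreducible in $X$ over $F_q(T)$,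
has $\deg_T f ≥ 1$, and splits completely over $F_q((T))$, then
$\deg_X f ≤ (q+1)·\deg_T f$. -/
theorem totallyTAdic_height_lower_bound {F : Type*} [Field F] [Fintype F]
    (f : Polynomial (Polynomial F)) (hprim : f.IsPrimitive)
    (hirr : Irreducible (toRat f))
    (hT : 1 ≤ degT f)
    (hsplit : SplitsCompletely f) :
    f.natDegree ≤ (Fintype.card F + 1) * degT f := by
  classical
  set q := Fintype.card F with hqdef
  set m := degT f with hm
  by_cases hn2 : f.natDegree ≤ 1
  · calc f.natDegree ≤ 1 * 1 := by simpa using hn2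
      _ ≤ (q + 1) * m := Nat.mul_le_mul (by omega) hT
  push_neg at hn2
  have hf0 : f ≠ 0 := by
    intro h
    exact hirr.ne_zero (by rw [toRat, h, Polynomial.map_zero])
  set φ := algebraMap (Polynomial F) (LaurentSeries F) with hφ
  have φinj : Function.Injective φ := Polynomial.algebraMap_hahnSeries_injective _
  set g := f.map φ with hgdef
  have hg0 : g ≠ 0 := (Polynomial.map_ne_zero_iff φinj).mpr hf0
  have hndeg : g.natDegree = f.natDegree := Polynomial.natDegree_map_eq_of_injective φinj f
  have hsplitid : Polynomial.Splits g :=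
    hsplit
  set R := g.roots with hR
  have hcard : Multiset.card R = f.natDegree := by
    rw [hR, (Polynomial.splits_iff_card_roots).mp hsplitid, hndeg]
  set lc := φ f.leadingCoeff with hlcdef
  have hlc0 : lc ≠ 0 := by
    intro h
    exact (Polynomial.leadingCoeff_ne_zero.mpr hf0) (φinj (by simpa using h))
  have hlcg : g.leadingCoeff = lc :=
    Polynomial.leadingCoeff_map_of_leadingCoeff_ne_zero φ hlc0
  have hfac : g = C lc * (R.map fun a => X - C a).prod := by
    conv_lhs => rw [hsplitid.eq_prod_roots]
    rw [hlcg]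
  have hcoe : ∀ k : ℕ, TotallyTAdicAux.Bnd 0 (g.coeff k) := by
    intro k
    rw [hgdef, Polynomial.coeff_map]
    exact TotallyTAdicAux.bnd_algebraMap _
  -- evaluations at constants are nonzero
  have hfc : ∀ c : F, f.eval (Polynomial.C c) ≠ 0 := by
    intro c hc
    obtain ⟨t, ht⟩ := Polynomial.dvd_iff_isRoot.mpr hc
    have htoRat : toRat f
        = (X - C (algebraMap (Polynomial F) (RatFunc F) (Polynomial.C c))) * toRat t := by
      rw [toRat, ht, Polynomial.map_mul, Polynomial.map_sub, Polynomial.map_X, Polynomial.map_C]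
      rfl
    rcases hirr.isUnit_or_isUnit htoRat with h | h
    · exact Polynomial.not_isUnit_X_sub_C _ h
    · have h0 : toRat t ≠ 0 := by
        intro h0
        rw [h0, mul_zero] at htoRat
        exact hirr.ne_zero htoRat
      have hdeg1 : (toRat f).natDegree = 1 := by
        rw [htoRat, Polynomial.natDegree_mul (Polynomial.X_sub_C_ne_zero _) h0,
          Polynomial.natDegree_X_sub_C, Polynomial.natDegree_eq_zero_of_isUnit h]
      have hd : (toRat f).natDegree = f.natDegree :=
        Polynomial.natDegree_map_eq_of_injective (IsFractionRing.injective _ _) f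
      omega
  have hgeval : ∀ c : F, g.eval (φ (Polynomial.C c)) = φ (f.eval (Polynomial.C c)) := by
    intro c
    rw [hgdef, Polynomial.eval_map, Polynomial.eval₂_at_apply]
  have hevalprod : ∀ y : LaurentSeries F, g.eval y = lc * (R.map fun a => y - a).prod := by
    intro y
    conv_lhs => rw [hfac]
    rw [Polynomial.eval_mul, Polynomial.eval_C, Polynomial.eval_multiset_prod, Multiset.map_map]
    congr 1
    apply congrArg
    apply Multiset.map_congr rfl
    intro a _
    simp
  have hgevalne : ∀ c : F, g.eval (φ (Polynomial.C c)) ≠ 0 := by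
    intro c h
    rw [hgeval c] at h
    exact hfc c (φinj (by simpa using h))
  have hfactor : ∀ c : F, ∀ a ∈ R, φ (Polynomial.C c) - a ≠ 0 := by
    intro c a ha h
    apply hgevalne c
    rw [hevalprod]
    have h0 : (0 : LaurentSeries F) ∈ R.map fun b => φ (Polynomial.C c) - b :=
      Multiset.mem_map.mpr ⟨a, ha, h⟩
    rw [Multiset.prod_eq_zero h0, mul_zero]
  -- order bounds
  have hA0 : 0 ≤ lc.order := TotallyTAdicAux.bnd_of_ne hlc0 (TotallyTAdicAux.bnd_algebraMap _)
  have hAm : lc.order ≤ (m : ℤ) := by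
    refine le_trans
      (TotallyTAdicAux.order_algebraMap_le _ (Polynomial.leadingCoeff_ne_zero.mpr hf0)) ?_
    have hmem : f.natDegree ∈ f.support := Polynomial.natDegree_mem_support_of_nonzero hf0
    have := Finset.le_sup (f := fun i => (f.coeff i).natDegree) hmem
    rw [hm, degT]
    exact_mod_cast this
  have hLA : 0 ≤ lc.order + (R.map fun a => min a.order 0).sum := by
    apply TotallyTAdicAux.lemA R lc hlc0
    intro k
    rw [← hfac]
    exact hcoe k
  set N := R.filter (fun a => a.order < 0) with hN
  set P := R.filter (fun a => ¬ a.order < 0) with hP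
  have hNP : N + P = R := Multiset.filter_add_not _ R
  set B := (N.map HahnSeries.order).sum with hB
  have hBsum : (R.map fun a => min a.order 0).sum = B := by
    rw [← hNP, Multiset.map_add, Multiset.sum_add]
    have h1 : (N.map fun a => min a.order 0) = N.map HahnSeries.order :=
      Multiset.map_congr rfl fun a ha => min_eq_left ((Multiset.mem_filter.mp ha).2).le
    have h2 : ((P.map fun a => min a.order 0)).sum = 0 :=
      Multiset.sum_eq_zero fun x hx => by
        obtain ⟨a, ha, rfl⟩ := Multiset.mem_map.mp hx
        exact min_eq_right (not_lt.mp ((Multiset.mem_filter.mp ha).2))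
    rw [h1, h2, add_zero, hB]
  have hAB : 0 ≤ lc.order + B := by rw [← hBsum]; exact hLA
  have hcardN : (Multiset.card N : ℤ) ≤ (m : ℤ) := by
    have h1 : (Multiset.card N : ℤ) ≤ (N.map fun a => -HahnSeries.order a).sum :=
      TotallyTAdicAux.card_le_sum_map fun a ha => by
        have := (Multiset.mem_filter.mp ha).2
        omega
    have h2 : (N.map fun a => -HahnSeries.order a).sum = -B := by
      have : (fun a : LaurentSeries F => -HahnSeries.order a)
          = fun a : LaurentSeries F => (-1 : ℤ) * HahnSeries.order a := by
        funext a; ring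
      rw [this, Multiset.sum_map_mul_left, hB]
      ring
    rw [h2] at h1
    linarith
  -- the product over all constants
  set Pprod := ∏ c : F, f.eval (Polynomial.C c) with hPprod
  have hP0 : Pprod ≠ 0 := Finset.prod_ne_zero_iff.mpr fun c _ => hfc c
  have hevaldeg : ∀ c : F, (f.eval (Polynomial.C c)).natDegree ≤ m := by
    intro c
    rw [Polynomial.eval_eq_sum_range]
    apply Polynomial.natDegree_sum_le_of_forall_le
    intro i _
    calc (f.coeff i * Polynomial.C c ^ i).natDegree
        ≤ (f.coeff i).natDegree + (Polynomial.C c ^ i).natDegree :=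
          Polynomial.natDegree_mul_le
      _ ≤ m := by
          rw [← Polynomial.C_pow, Polynomial.natDegree_C, add_zero]
          rcases eq_or_ne (f.coeff i) 0 with h | h
          · simp [h]
          · rw [hm, degT]
            exact Finset.le_sup (f := fun j => (f.coeff j).natDegree)
              (Polynomial.mem_support_iff.mpr h)
  have hPdegnat : Pprod.natDegree ≤ q * m := by
    rw [hPprod, Polynomial.natDegree_prod _ _ fun c _ => hfc c]
    calc ∑ c : F, (f.eval (Polynomial.C c)).natDegree
        ≤ Finset.univ.card * m :=
          Finset.sum_le_card_nsmul _ _ m fun c _ => hevaldeg c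
      _ = q * m := by rw [Finset.card_univ]
  have hordP : (φ Pprod).order = ∑ c : F, (g.eval (φ (Polynomial.C c))).order := by
    have heq : φ Pprod = ∏ c : F, g.eval (φ (Polynomial.C c)) := by
      rw [hPprod, map_prod]
      exact Finset.prod_congr rfl fun c _ => (hgeval c).symm
    rw [heq, TotallyTAdicAux.order_finset_prod _ _ fun c _ => hgevalne c]
  have hordPle : (φ Pprod).order ≤ (q : ℤ) * m := by
    refine le_trans (TotallyTAdicAux.order_algebraMap_le _ hP0) ?_
    exact_mod_cast hPdegnat
  have hevalorder : ∀ c : F, (g.eval (φ (Polynomial.C c))).order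
      = lc.order + (R.map fun a => (φ (Polynomial.C c) - a).order).sum := by
    intro c
    rw [hevalprod]
    have hz : (0 : LaurentSeries F) ∉ R.map fun a => φ (Polynomial.C c) - a := by
      intro h
      obtain ⟨a, ha, h⟩ := Multiset.mem_map.mp h
      exact hfactor c a ha h
    rw [HahnSeries.order_mul hlc0 (Multiset.prod_ne_zero hz),
      TotallyTAdicAux.order_multiset_prod _ hz, Multiset.map_map]
    rfl
  have hsum : ∑ c : F, (g.eval (φ (Polynomial.C c))).order
      = (q : ℤ) * lc.order
        + (R.map fun a => ∑ c : F, (φ (Polynomial.C c) - a).order).sum := by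
    rw [Finset.sum_congr rfl fun c _ => hevalorder c, Finset.sum_add_distrib,
      Finset.sum_const, Finset.card_univ, nsmul_eq_mul,
      TotallyTAdicAux.multiset_sum_comm]
  have hsplitNP : (R.map fun a => ∑ c : F, (φ (Polynomial.C c) - a).order).sum
      = (N.map fun a => ∑ c : F, (φ (Polynomial.C c) - a).order).sum
      + (P.map fun a => ∑ c : F, (φ (Polynomial.C c) - a).order).sum := by
    rw [← hNP, Multiset.map_add, Multiset.sum_add]
  have hNpart : (N.map fun a => ∑ c : F, (φ (Polynomial.C c) - a).order).sum
      = (q : ℤ) * B := by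
    have hmap : (N.map fun a => ∑ c : F, (φ (Polynomial.C c) - a).order)
        = N.map fun a => (q : ℤ) * a.order := by
      apply Multiset.map_congr rfl
      intro a ha
      have hneg : a.order < 0 := (Multiset.mem_filter.mp ha).2
      rw [Finset.sum_congr rfl fun c _ =>
        TotallyTAdicAux.order_sub_of_neg hneg _ (TotallyTAdicAux.bnd_algebraMap _),
        Finset.sum_const, Finset.card_univ, nsmul_eq_mul]
    rw [hmap, Multiset.sum_map_mul_left, hB]
  have hPpart : (Multiset.card P : ℤ)
      ≤ (P.map fun a => ∑ c : F, (φ (Polynomial.C c) - a).order).sum := by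
    apply TotallyTAdicAux.card_le_sum_map
    intro a ha
    have h0 : 0 ≤ a.order := not_lt.mp ((Multiset.mem_filter.mp ha).2)
    exact TotallyTAdicAux.one_le_sum_orders h0
      fun c => hfactor c a (Multiset.mem_of_mem_filter ha)
  have hq0 : (0 : ℤ) ≤ (q : ℤ) := Int.natCast_nonneg _
  have hcardP : (Multiset.card P : ℤ) ≤ (q : ℤ) * m := by
    have hle := hordPle
    rw [hordP, hsum, hsplitNP, hNpart] at hle
    have h3 : 0 ≤ (q : ℤ) * lc.order + (q : ℤ) * B := by
      have := mul_nonneg hq0 hAB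
      rw [mul_add] at this
      linarith
    linarith
  have hc : (Multiset.card N : ℤ) + Multiset.card P = f.natDegree := by
    rw [← hcard, ← hNP]
    push_cast [Multiset.card_add]
    ring
  have hfin : (f.natDegree : ℤ) ≤ ((q + 1) * m : ℕ) := by
    push_cast
    linarith
  exact_mod_cast hfin
end

section
/- Let q be a prime power and let L be an intermediate field of the extension F_q((T))/F_q(T) (i.e. a subfield of F_q((T)) containing the canonical image of F_q(T)). If every element of L is algebraic over F_q(T), then L is a separable extension of F_q(T). -/
open scoped RatFunc

open Polynomial HahnSeries

namespace SepAux

variable {F : Type*} [Field F]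

noncomputable def D : LaurentSeries F →ₗ[F] LaurentSeries F := LaurentSeries.derivative F

lemma D_coeff (f : LaurentSeries F) (n : ℤ) :
    (D f).coeff n = (n + 1) • f.coeff (n + 1) := by
  show (LaurentSeries.hasseDeriv F 1 f).coeff n = _
  rw [LaurentSeries.hasseDeriv_coeff]
  norm_num [Ring.choose_one_right]

lemma mul_coeff_subset (x y : LaurentSeries F) {s t : Set ℤ} (hs : s.IsPWO) (ht : t.IsPWO)
    (hxs : x.support ⊆ s) (hyt : y.support ⊆ t) (a : ℤ) :
    (x * y).coeff a = ∑ ij ∈ Finset.antidiagonal hs ht a, x.coeff ij.1 * y.coeff ij.2 := by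
  rw [HahnSeries.coeff_mul_left' hs hxs]
  refine Finset.sum_subset (Finset.antidiagonal_mono_right hyt) ?_
  intro ij h1 h2
  simp only [Finset.mem_antidiagonal] at h1 h2
  have hy : y.coeff ij.2 = 0 := by
    by_contra h
    exact h2 ⟨h1.1, h, h1.2.2⟩
  rw [hy, mul_zero]

lemma isPWO_Ici (c : ℤ) : (Set.Ici c).IsPWO :=
  Set.isPWO_iff_isWF.mpr bddBelow_Ici.wellFoundedOn_lt

lemma supp_subset (x : LaurentSeries F) : x.support ⊆ Set.Ici (x.order - 1) := by
  intro n hn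
  simp only [Set.mem_Ici]
  by_contra hc
  push_neg at hc
  exact (HahnSeries.mem_support _ _).mp hn
    (HahnSeries.coeff_eq_zero_of_lt_order (by omega))

lemma supp_D_subset (x : LaurentSeries F) : (D x).support ⊆ Set.Ici (x.order - 1) := by
  intro n hn
  simp only [Set.mem_Ici]
  by_contra hc
  push_neg at hc
  refine (HahnSeries.mem_support _ _).mp hn ?_
  rw [D_coeff, HahnSeries.coeff_eq_zero_of_lt_order (by omega : n + 1 < x.order), smul_zero]

lemma D_mul (x y : LaurentSeries F) : D (x * y) = D x * y + x * D y := by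
  by_cases hx : x = 0
  · simp [hx]
  by_cases hy : y = 0
  · simp [hy]
  have hsx := isPWO_Ici (x.order - 1)
  have hsy := isPWO_Ici (y.order - 1)
  ext n
  rw [HahnSeries.coeff_add, D_coeff,
    mul_coeff_subset x y hsx hsy (supp_subset x) (supp_subset y) (n + 1),
    mul_coeff_subset (D x) y hsx hsy (supp_D_subset x) (supp_subset y) n,
    mul_coeff_subset x (D y) hsx hsy (supp_subset x) (supp_D_subset y) n,
    Finset.smul_sum]
  have h1 : ∑ ij ∈ Finset.antidiagonal hsx hsy n, (D x).coeff ij.1 * y.coeff ij.2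
      = ∑ ij ∈ Finset.antidiagonal hsx hsy (n + 1),
          ij.1 • (x.coeff ij.1 * y.coeff ij.2) := by
    refine Finset.sum_of_injOn (fun ij => (ij.1 + 1, ij.2)) ?_ ?_ ?_ ?_
    · intro a _ b _ hab
      simp only [Prod.mk.injEq, Prod.ext_iff] at hab ⊢
      omega
    · intro ij hij
      simp only [Finset.mem_coe, Finset.mem_antidiagonal, Set.mem_Ici,
        Set.mem_Ici] at hij ⊢
      obtain ⟨h1, h2, h3⟩ := hij
      exact ⟨by omega, h2, by omega⟩
    · intro ij hij hnot
      have hx0 : x.coeff ij.1 = 0 := by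
        by_contra hc
        refine hnot ?_
        simp only [Finset.mem_antidiagonal, Set.mem_Ici] at hij
        refine ⟨(ij.1 - 1, ij.2), ?_, by simp⟩
        simp only [Finset.mem_coe, Finset.mem_antidiagonal, Set.mem_Ici]
        have : x.order ≤ ij.1 := by
          by_contra hlt
          exact hc (HahnSeries.coeff_eq_zero_of_lt_order (by omega))
        exact ⟨by omega, hij.2.1, by omega⟩
      rw [hx0, zero_mul, smul_zero]
    · intro ij hij
      rw [D_coeff, smul_mul_assoc]
  have h2 : ∑ ij ∈ Finset.antidiagonal hsx hsy n, x.coeff ij.1 * (D y).coeff ij.2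
      = ∑ ij ∈ Finset.antidiagonal hsx hsy (n + 1),
          ij.2 • (x.coeff ij.1 * y.coeff ij.2) := by
    refine Finset.sum_of_injOn (fun ij => (ij.1, ij.2 + 1)) ?_ ?_ ?_ ?_
    · intro a _ b _ hab
      simp only [Prod.mk.injEq, Prod.ext_iff] at hab ⊢
      omega
    · intro ij hij
      simp only [Finset.mem_coe, Finset.mem_antidiagonal, Set.mem_Ici,
        Set.mem_Ici] at hij ⊢
      obtain ⟨h1, h2, h3⟩ := hij
      exact ⟨h1, by omega, by omega⟩
    · intro ij hij hnot
      have hy0 : y.coeff ij.2 = 0 := by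
        by_contra hc
        refine hnot ?_
        simp only [Finset.mem_antidiagonal, Set.mem_Ici] at hij
        refine ⟨(ij.1, ij.2 - 1), ?_, by simp⟩
        simp only [Finset.mem_coe, Finset.mem_antidiagonal, Set.mem_Ici]
        have : y.order ≤ ij.2 := by
          by_contra hlt
          exact hc (HahnSeries.coeff_eq_zero_of_lt_order (by omega))
        exact ⟨hij.1, by omega, by omega⟩
      rw [hy0, mul_zero, smul_zero]
    · intro ij hij
      rw [D_coeff, mul_smul_comm]
  rw [h1, h2, ← Finset.sum_add_distrib]
  refine Finset.sum_congr rfl ?_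
  intro ij hij
  have hsum : ij.1 + ij.2 = n + 1 := (Finset.mem_antidiagonal.mp hij).2.2
  rw [← add_smul, hsum]


lemma D_one : D (1 : LaurentSeries F) = 0 := by
  have h := D_mul (1 : LaurentSeries F) 1
  rw [mul_one, mul_one, one_mul] at h
  exact (left_eq_add.mp h)

lemma D_pow (u : LaurentSeries F) (k : ℕ) : D (u ^ k) = k • (u ^ (k - 1) * D u) := by
  induction k with
  | zero => simp [D_one]
  | succ k ih =>
    rcases Nat.eq_zero_or_pos k with rfl | hk
    · simp
    · have hk1 : k - 1 + 1 = k := Nat.succ_pred_eq_of_pos hk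
      rw [pow_succ, D_mul, ih, smul_mul_assoc, mul_right_comm, ← pow_succ, hk1,
        Nat.add_sub_cancel, succ_nsmul]

/-- The canonical map `F[X] → F⸨X⸩`. -/
noncomputable def Pc : Polynomial F →+* LaurentSeries F :=
  (algebraMap (RatFunc F) (LaurentSeries F)).comp (algebraMap (Polynomial F) (RatFunc F))

lemma Pc_apply (f : Polynomial F) : Pc f = ((f : PowerSeries F) : LaurentSeries F) := by
  rw [RatFunc.coe_coe]
  rfl

lemma Pc_injective : Function.Injective (Pc (F := F)) :=
  (algebraMap (RatFunc F) (LaurentSeries F)).injective.comp (RatFunc.algebraMap_injective F)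

lemma Pc_coeff (f : Polynomial F) (n : ℤ) :
    (Pc f).coeff n = if n < 0 then 0 else f.coeff n.natAbs := by
  rw [Pc_apply, PowerSeries.coeff_coe]
  simp [Polynomial.coeff_coe]

lemma D_Pc (f : Polynomial F) : D (Pc f) = Pc (derivative f) := by
  ext n
  rw [D_coeff, Pc_coeff, Pc_coeff]
  by_cases h : n < 0
  · rw [if_pos h]
    by_cases h1 : n + 1 < 0
    · rw [if_pos h1, smul_zero]
    · have h2 : (n + 1 : ℤ) = 0 := by omega
      rw [h2, zero_smul]
  · rw [if_neg h, if_neg (by omega : ¬ n + 1 < 0), Polynomial.coeff_derivative]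
    have h2 : (n + 1).natAbs = n.natAbs + 1 := by omega
    rw [h2, zsmul_eq_mul]
    have h3 : ((n + 1 : ℤ) : F) = ((n.natAbs : F) + 1) := by
      have hn : n + 1 = ((n.natAbs + 1 : ℕ) : ℤ) := by omega
      rw [hn, Int.cast_natCast, Nat.cast_add, Nat.cast_one]
    rw [h3, mul_comm]

/-- abbreviation for the algebra map -/
noncomputable def A : RatFunc F →+* LaurentSeries F := algebraMap (RatFunc F) (LaurentSeries F)

lemma A_injective : Function.Injective (A (F := F)) := A.injective

lemma A_alg (f : Polynomial F) : A (algebraMap (Polynomial F) (RatFunc F) f) = Pc f := rfl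

lemma A_mul_denom (a : RatFunc F) : A a * Pc a.denom = Pc a.num := by
  rw [← A_alg, ← A_alg, ← map_mul]
  congr 1
  nth_rewrite 1 [← RatFunc.num_div_denom a]
  rw [div_mul_cancel₀]
  exact RatFunc.algebraMap_ne_zero (RatFunc.denom_ne_zero a)

lemma D_A_rel (a : RatFunc F) :
    D (A a) * Pc a.denom = Pc (derivative a.num) - A a * Pc (derivative a.denom) := by
  have h := congrArg D (A_mul_denom a)
  rw [D_mul, D_Pc, D_Pc] at h
  exact eq_sub_of_add_eq h

lemma Pc_denom_ne_zero (a : RatFunc F) : Pc a.denom ≠ 0 := fun h =>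
  RatFunc.denom_ne_zero a (Pc_injective (by rw [h, map_zero]))

lemma D_A_mem (a : RatFunc F) : ∃ c : RatFunc F, D (A a) = A c := by
  refine ⟨(algebraMap _ _ (derivative a.num) - a * algebraMap _ _ (derivative a.denom)) /
    algebraMap _ _ a.denom, ?_⟩
  have hA : A ((algebraMap _ _ (derivative a.num) - a * algebraMap _ _ (derivative a.denom)) /
      algebraMap (Polynomial F) (RatFunc F) a.denom)
      = (Pc (derivative a.num) - A a * Pc (derivative a.denom)) / Pc a.denom := by
    rw [map_div₀, map_sub, map_mul, A_alg, A_alg, A_alg]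
  rw [hA, eq_div_iff (Pc_denom_ne_zero a)]
  exact D_A_rel a

lemma poly_pthRoot (p : ℕ) [Fintype F] [CharP F p] (hp : p.Prime) (f : Polynomial F)
    (hf : derivative f = 0) : ∃ h : Polynomial F, h ^ p = f := by
  haveI : Fact p.Prime := ⟨hp⟩
  refine ⟨(Polynomial.contract p f).map ((frobeniusEquiv F p).symm : F →+* F), ?_⟩
  have h1 : (((Polynomial.contract p f).map ((frobeniusEquiv F p).symm : F →+* F)).map
      (frobenius F p)) = Polynomial.contract p f := by
    rw [Polynomial.map_map]
    have : (frobenius F p).comp ((frobeniusEquiv F p).symm : F →+* F) = RingHom.id F := by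
      ext a
      simp [frobenius_apply_frobeniusEquiv_symm]
    rw [this, Polynomial.map_id]
  rw [← Polynomial.map_frobenius_expand, Polynomial.map_expand, h1,
    Polynomial.expand_contract p hf hp.ne_zero]

lemma rat_pthRoot (p : ℕ) [Fintype F] [CharP F p] (hp : p.Prime) (a : RatFunc F)
    (ha : D (A a) = 0) : ∃ b : RatFunc F, b ^ p = a := by
  by_cases ha0 : a = 0
  · exact ⟨0, by rw [zero_pow hp.ne_zero, ha0]⟩
  have hrel := D_A_rel a
  rw [ha, zero_mul] at hrel
  have hrel2 : Pc (derivative a.num) = A a * Pc (derivative a.denom) := by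
    have := hrel.symm
    rwa [sub_eq_zero] at this
  have hkey : a.num.derivative * a.denom = a.num * a.denom.derivative := by
    apply Pc_injective
    rw [map_mul, map_mul, hrel2, mul_right_comm, A_mul_denom]
  have hnum0 : a.num ≠ 0 := RatFunc.num_ne_zero ha0
  have hcop := RatFunc.isCoprime_num_denom a
  have hd1 : a.num ∣ a.num.derivative := by
    refine hcop.dvd_of_dvd_mul_right ?_
    exact ⟨a.denom.derivative, hkey⟩
  have hnum' : a.num.derivative = 0 := by
    by_contra h'
    exact absurd (Polynomial.degree_le_of_dvd hd1 h')
      (not_le_of_gt (Polynomial.degree_derivative_lt hnum0))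
  have hd2 : a.denom ∣ a.denom.derivative := by
    refine hcop.symm.dvd_of_dvd_mul_right ?_
    exact ⟨a.num.derivative, by rw [mul_comm, ← hkey, mul_comm]⟩
  have hden' : a.denom.derivative = 0 := by
    by_contra h'
    exact absurd (Polynomial.degree_le_of_dvd hd2 h')
      (not_le_of_gt (Polynomial.degree_derivative_lt (RatFunc.denom_ne_zero a)))
  obtain ⟨h1, hh1⟩ := poly_pthRoot p hp a.num hnum'
  obtain ⟨h2, hh2⟩ := poly_pthRoot p hp a.denom hden'
  refine ⟨algebraMap _ _ h1 / algebraMap _ _ h2, ?_⟩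
  rw [div_pow, ← map_pow, ← map_pow, hh1, hh2, RatFunc.num_div_denom]

end SepAux

open SepAux Polynomial

/-- Any intermediate field `L` of `F_q((T))/F_q(T)` all of whose elements are
algebraic over `F_q(T)` is a separable extension of `F_q(T)`: every element of `L`
is separable over `F_q(T)`. -/
theorem algebraic_subfield_of_laurentSeries_isSeparable {F : Type*} [Field F] [Fintype F]
    (L : IntermediateField (RatFunc F) (LaurentSeries F))
    (halg : ∀ x : LaurentSeries F, x ∈ L → IsAlgebraic (RatFunc F) x) :
    ∀ x : LaurentSeries F, x ∈ L → IsSeparable (RatFunc F) x := by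
  intro x hx
  have hint : IsIntegral (RatFunc F) x := (halg x hx).isIntegral
  by_contra hsep
  have hsep2 : ¬ (minpoly (RatFunc F) x).Separable := hsep
  obtain ⟨p, hchar⟩ := CharP.exists F
  haveI := hchar
  have hp : p.Prime := CharP.char_is_prime F p
  haveI : Fact p.Prime := ⟨hp⟩
  haveI hKp : CharP (RatFunc F) p := charP_of_injective_ringHom
    (f := (algebraMap (Polynomial F) (RatFunc F)).comp Polynomial.C)
    ((RatFunc.algebraMap_injective F).comp Polynomial.C_injective) p
  set m := minpoly (RatFunc F) x with hm
  have hirr : Irreducible m := minpoly.irreducible hint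
  have hm' : derivative m = 0 := by
    by_contra h'
    exact hsep2 ((Polynomial.separable_iff_derivative_ne_zero hirr).mpr h')
  set N := m.natDegree with hNdef
  have hN : 0 < N := minpoly.natDegree_pos hint
  -- differentiate the relation m(x) = 0
  have hsum : ∑ i ∈ Finset.range (N + 1), A (m.coeff i) * x ^ i = 0 := by
    have h0 : (Polynomial.aeval x) m = 0 := minpoly.aeval _ _
    rw [Polynomial.aeval_eq_sum_range] at h0
    simpa only [Algebra.smul_def, A] using h0
  have hDsum : ∑ i ∈ Finset.range (N + 1), D (A (m.coeff i)) * x ^ i = 0 := by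
    have h1 : D (∑ i ∈ Finset.range (N + 1), A (m.coeff i) * x ^ i) = 0 := by
      rw [hsum, map_zero]
    rw [map_sum] at h1
    rw [← h1]
    refine (Finset.sum_congr rfl ?_).symm
    intro i _
    rw [D_mul, D_pow]
    suffices hsuf : A (m.coeff i) * (i • (x ^ (i - 1) * D x)) = 0 by rw [hsuf, add_zero]
    rcases Nat.eq_zero_or_pos i with rfl | hi
    · simp
    · have hz : (i : RatFunc F) * m.coeff i = 0 := by
        have hcd := congrArg (fun q => Polynomial.coeff q (i - 1)) hm'
        simp only [Polynomial.coeff_derivative, Polynomial.coeff_zero] at hcd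
        have hi1 : i - 1 + 1 = i := Nat.succ_pred_eq_of_pos hi
        rw [hi1] at hcd
        have hcast : ((i - 1 : ℕ) : RatFunc F) + 1 = (i : RatFunc F) := by
          exact_mod_cast congrArg (Nat.cast : ℕ → RatFunc F) (Nat.succ_pred_eq_of_pos hi)
        rw [hcast] at hcd
        rw [mul_comm]
        exact hcd
      calc A (m.coeff i) * (i • (x ^ (i - 1) * D x))
          = (i • A (m.coeff i)) * (x ^ (i - 1) * D x) := by
            rw [mul_smul_comm, smul_mul_assoc]
        _ = A ((i : RatFunc F) * m.coeff i) * (x ^ (i - 1) * D x) := by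
            rw [← nsmul_eq_mul, map_nsmul]
        _ = 0 := by rw [hz, map_zero, zero_mul]
  -- the coefficients of the would-be smaller annihilating polynomial
  choose c hc using fun i => D_A_mem (m.coeff i)
  set P : Polynomial (RatFunc F) := ∑ i ∈ Finset.range (N + 1), Polynomial.C (c i) * X ^ i with hPdef
  have coeffP : ∀ k, P.coeff k = if k ≤ N then c k else 0 := by
    intro k
    rw [hPdef, Polynomial.finset_sum_coeff]
    simp only [Polynomial.coeff_C_mul, Polynomial.coeff_X_pow, mul_ite, mul_one, mul_zero]
    rw [Finset.sum_ite_eq (Finset.range (N + 1)) k c]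
    simp [Nat.lt_succ_iff]
  have hcN : c N = 0 := by
    apply A_injective
    rw [← hc N, (minpoly.monic hint).coeff_natDegree, map_one, D_one, map_zero]
  have haevalP : Polynomial.aeval x P = 0 := by
    rw [hPdef, map_sum]
    simp only [map_mul, Polynomial.aeval_C, Polynomial.aeval_X_pow]
    rw [← hDsum]
    refine Finset.sum_congr rfl ?_
    intro i _
    rw [hc i]
    rfl
  have hPdeg : P.degree < m.degree := by
    rw [Polynomial.degree_eq_natDegree (minpoly.ne_zero hint), ← hNdef]
    rw [Polynomial.degree_lt_iff_coeff_zero]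
    intro k hk
    have hk' : N ≤ k := by exact_mod_cast hk
    rw [coeffP k]
    rcases eq_or_lt_of_le hk' with h | h
    · rw [if_pos h.ge, ← h, hcN]
    · rw [if_neg (by omega)]
  have hP0 : P = 0 := by
    by_contra hP0
    exact absurd (minpoly.degree_le_of_ne_zero (RatFunc F) x hP0 haevalP)
      (not_le_of_gt hPdeg)
  have hDA0 : ∀ i ≤ N, D (A (m.coeff i)) = 0 := by
    intro i hi
    have h1 := coeffP i
    rw [hP0, Polynomial.coeff_zero, if_pos hi] at h1
    rw [hc i, ← h1, map_zero]
  -- every coefficient of m is a p-th power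
  have hb : ∀ i, ∃ b : RatFunc F, b ^ p = m.coeff i := by
    intro i
    by_cases hi : i ≤ N
    · exact rat_pthRoot p hp _ (hDA0 i hi)
    · exact ⟨0, by
        rw [zero_pow hp.ne_zero, eq_comm]
        exact Polynomial.coeff_eq_zero_of_natDegree_lt (by omega)⟩
  choose b hbspec using hb
  set g : Polynomial (RatFunc F) := Polynomial.contract p m with hgdef
  have hgm : Polynomial.expand _ p g = m := Polynomial.expand_contract p hm' hp.ne_zero
  set Q : Polynomial (RatFunc F) :=
    ∑ j ∈ Finset.range (g.natDegree + 1), Polynomial.C (b (j * p)) * X ^ j with hQdef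
  have coeffQ : ∀ k, Q.coeff k = if k ≤ g.natDegree then b (k * p) else 0 := by
    intro k
    rw [hQdef, Polynomial.finset_sum_coeff]
    simp only [Polynomial.coeff_C_mul, Polynomial.coeff_X_pow, mul_ite, mul_one, mul_zero]
    rw [Finset.sum_ite_eq (Finset.range (g.natDegree + 1)) k (fun j => b (j * p))]
    simp [Nat.lt_succ_iff]
  have hQg : Q.map (frobenius (RatFunc F) p) = g := by
    ext j
    rw [Polynomial.coeff_map, coeffQ j, frobenius_def]
    by_cases hj : j ≤ g.natDegree
    · rw [if_pos hj, hbspec, hgdef, Polynomial.coeff_contract hp.ne_zero]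
    · rw [if_neg hj, zero_pow hp.ne_zero, eq_comm]
      exact Polynomial.coeff_eq_zero_of_natDegree_lt (by omega)
  have hmQ : m = Q ^ p := by
    rw [← hgm, ← hQg, ← Polynomial.map_expand, Polynomial.map_frobenius_expand]
  have hQdeg : Q.natDegree ≠ 0 := by
    intro h
    have h2 : m.natDegree = p * Q.natDegree := by rw [hmQ, Polynomial.natDegree_pow]
    rw [h, mul_zero] at h2
    omega
  have hps : Q ^ p = Q * Q ^ (p - 1) := by
    rw [← pow_succ']
    congr 1
    have := hp.two_le
    omega
  rw [hmQ] at hirr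
  rcases hirr.isUnit_or_isUnit hps with h | h
  · exact hQdeg (Polynomial.natDegree_eq_zero_of_isUnit h)
  · have h2 := Polynomial.natDegree_eq_zero_of_isUnit h
    rw [Polynomial.natDegree_pow] at h2
    rcases Nat.mul_eq_zero.mp h2 with h3 | h3
    · have := hp.two_le; omega
    · exact hQdeg h3
end

section
/- Let q be a prime power and let f ∈ F_q[T][X] be primitive, irreducible as a polynomial in X over F_q(T), not a constant multiple of X, and suppose f splits completely over F_q((T)). Then the number of distinct roots β of f in F_q((T)) with ord(β) > 0 is at most deg_T f. (Equivalently: if α ≠ 0 is totally T-adic of degree d over F_q(T) and r of its conjugates have positive T-adic valuation, then h(α) ≥ r/d.) -/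
open Polynomial

section Aux

variable {F : Type*} [Field F]

/-- A Laurent series of nonnegative order is (the image of) a power series. -/
lemma LaurentSeries.eq_coe_powerSeries (x : LaurentSeries F) (hx : 0 ≤ x.order) :
    ((PowerSeries.X ^ x.order.toNat * x.powerSeriesPart : PowerSeries F) : LaurentSeries F) = x :=
  LaurentSeries.X_order_mul_powerSeriesPart (Int.toNat_of_nonneg hx)

/-- The image of a power series in the Laurent series field has nonnegative order. -/
lemma LaurentSeries.ofPowerSeries_order_nonneg (y : PowerSeries F) :
    0 ≤ (HahnSeries.ofPowerSeries ℤ F y).order := by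
  by_cases h : (HahnSeries.ofPowerSeries ℤ F y) = 0
  · rw [h, HahnSeries.order_zero]
  · by_contra hneg
    push_neg at hneg
    have h2 := mt HahnSeries.coeff_order_eq_zero.mp h
    rw [show ((HahnSeries.ofPowerSeries ℤ F) y) = ((y : PowerSeries F) : LaurentSeries F) from rfl,
      PowerSeries.coeff_coe, if_pos hneg] at h2
    exact h2 rfl

/-- The order of a finite product of nonzero Laurent series is the sum of the orders. -/
lemma LaurentSeries.order_prod {ι : Type*} (s : Finset ι) (g : ι → LaurentSeries F)
    (h : ∀ i ∈ s, g i ≠ 0) :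
    (∏ i ∈ s, g i).order = ∑ i ∈ s, (g i).order := by
  classical
  induction s using Finset.cons_induction with
  | empty => simp [HahnSeries.order_one]
  | cons a t hat ih =>
    rw [Finset.prod_cons, Finset.sum_cons,
      HahnSeries.order_mul (h a (Finset.mem_cons_self a t))
        (Finset.prod_ne_zero_iff.mpr fun i hi => h i (Finset.mem_cons_of_mem hi)),
      ih fun i hi => h i (Finset.mem_cons_of_mem hi)]

/-- An irreducible polynomial which is not a constant multiple of `X` has nonzero
constant coefficient. -/
lemma coeff_zero_ne_of_irreducible (f : Polynomial (Polynomial F))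
    (hirr : Irreducible (toRat f))
    (hX : ∀ c : Polynomial F, f ≠ Polynomial.C c * Polynomial.X) :
    f.coeff 0 ≠ 0 := by
  intro hc
  obtain ⟨u, hu⟩ := Polynomial.X_dvd_iff.mpr hc
  have hfu : toRat f = X * toRat u := by
    rw [toRat, hu, Polynomial.map_mul, Polynomial.map_X]; rfl
  rcases hirr.isUnit_or_isUnit hfu with h | h
  · exact Polynomial.not_isUnit_X h
  · have hu0 : toRat u ≠ 0 := h.ne_zero
    have h1 : (toRat f).natDegree = 1 := by
      rw [hfu, Polynomial.natDegree_mul Polynomial.X_ne_zero hu0,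
        Polynomial.natDegree_X, Polynomial.natDegree_eq_zero_of_isUnit h]
    have hdeg : f.natDegree = 1 := by
      rwa [toRat, Polynomial.natDegree_map_eq_of_injective
        (RatFunc.algebraMap_injective F)] at h1
    have h2 := Polynomial.eq_X_add_C_of_natDegree_le_one (le_of_eq hdeg)
    rw [hc, map_zero, add_zero] at h2
    exact hX (f.coeff 1) h2

end Aux

/-- The number of distinct roots of positive valuation of a completely split,
primitive, irreducible $f ∈ F_q[T][X]$ (not a constant multiple of $X$) is at most
$\deg_T f$. -/
theorem card_positive_valuation_roots_le {F : Type*} [Field F] [Fintype F]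
    (f : Polynomial (Polynomial F)) (hprim : f.IsPrimitive)
    (hirr : Irreducible (toRat f))
    (hX : ∀ c : Polynomial F, f ≠ Polynomial.C c * Polynomial.X)
    (hsplit : SplitsCompletely f) :
    {β : LaurentSeries F |
        (f.map (algebraMap (Polynomial F) (LaurentSeries F))).IsRoot β ∧ 0 < β.order}.ncard ≤ degT f := by
  classical
  set A := algebraMap (Polynomial F) (LaurentSeries F) with hA
  have hinj : Function.Injective A := Polynomial.algebraMap_hahnSeries_injective ℤ
  have hf0 : f ≠ 0 := by
    rintro rfl
    exact hirr.ne_zero (Polynomial.map_zero _)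
  have hc0 : f.coeff 0 ≠ 0 := coeff_zero_ne_of_irreducible f hirr hX
  set fm := f.map A with hfm
  have hfm0 : fm ≠ 0 := (Polynomial.map_ne_zero_iff hinj).mpr hf0
  -- the set of positive-order roots as a finset
  set s : Finset (LaurentSeries F) := fm.roots.toFinset.filter (fun β => 0 < β.order) with hs
  have hset : {β : LaurentSeries F | fm.IsRoot β ∧ 0 < β.order} = ↑s := by
    ext β
    simp only [Set.mem_setOf_eq, hs, Finset.coe_filter, Multiset.mem_toFinset,
      Polynomial.mem_roots', Set.mem_setOf_eq]
    tauto
  rw [hset, Set.ncard_coe_finset]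
  have hspos : ∀ β ∈ s, 0 < β.order := by
    intro β hβ
    rw [hs, Finset.mem_filter] at hβ
    exact hβ.2
  have hsne : ∀ β ∈ s, β ≠ 0 := by
    intro β hβ h0
    have := hspos β hβ
    rw [h0, HahnSeries.order_zero] at this
    exact lt_irrefl 0 this
  -- the monic product of X - β over positive-order roots divides fm
  set P : Polynomial (LaurentSeries F) := ∏ β ∈ s, (X - C β) with hP
  have hPmonic : P.Monic := monic_prod_of_monic _ _ fun β _ => monic_X_sub_C β
  have hPdvd : P ∣ fm := by
    refine Finset.prod_dvd_of_coprime (z := fm)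
      (s := fun β : LaurentSeries F => X - C β) ?_ ?_
    · intro β hβ γ hγ hne
      exact Polynomial.pairwise_coprime_X_sub_C Function.injective_id hne
    · intro β hβ
      rw [hs, Finset.mem_filter, Multiset.mem_toFinset, Polynomial.mem_roots'] at hβ
      exact Polynomial.dvd_iff_isRoot.mpr hβ.1.2
  set h := fm /ₘ P with hh
  have hfactor : fm = P * h := by
    have h2 := Polynomial.modByMonic_add_div fm P
    rwa [(Polynomial.modByMonic_eq_zero_iff_dvd hPmonic).mpr hPdvd, zero_add, eq_comm] at h2
  -- integrality of the cofactor h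
  set ι : PowerSeries F →+* LaurentSeries F := HahnSeries.ofPowerSeries ℤ F with hι
  set g : Polynomial (PowerSeries F) := f.map (Polynomial.coeToPowerSeries.ringHom) with hg
  have hgm : g.map ι = fm := by
    rw [hg, Polynomial.map_map]
    rfl
  set pre : LaurentSeries F → PowerSeries F :=
    fun x => PowerSeries.X ^ x.order.toNat * x.powerSeriesPart with hpre
  set Ppre : Polynomial (PowerSeries F) := ∏ β ∈ s, (X - C (pre β)) with hPpre
  have hPpremonic : Ppre.Monic := monic_prod_of_monic _ _ fun β _ => monic_X_sub_C _
  have hPpremap : Ppre.map ι = P := by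
    rw [hPpre, Polynomial.map_prod, hP]
    refine Finset.prod_congr rfl fun β hβ => ?_
    rw [Polynomial.map_sub, Polynomial.map_X, Polynomial.map_C]
    congr 1
    exact congrArg _ (LaurentSeries.eq_coe_powerSeries β (le_of_lt (hspos β hβ)))
  have hhmap : h = (g /ₘ Ppre).map ι := by
    rw [hh, Polynomial.map_divByMonic ι hPpremonic, hPpremap, hgm]
  -- nonvanishing of constant coefficients
  have hfc0 : fm.coeff 0 ≠ 0 := by
    rw [hfm, Polynomial.coeff_map]
    intro h2
    exact hc0 (hinj (by rw [h2, map_zero]))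
  have hco : fm.coeff 0 = P.coeff 0 * h.coeff 0 := by
    rw [hfactor, Polynomial.mul_coeff_zero]
  have hP0 : P.coeff 0 ≠ 0 := left_ne_zero_of_mul (hco ▸ hfc0)
  have hh0 : h.coeff 0 ≠ 0 := right_ne_zero_of_mul (hco ▸ hfc0)
  -- order computations
  have horder : (fm.coeff 0).order = (P.coeff 0).order + (h.coeff 0).order := by
    rw [hco, HahnSeries.order_mul hP0 hh0]
  have hP0val : P.coeff 0 = ∏ β ∈ s, (-β) := by
    rw [Polynomial.coeff_zero_eq_eval_zero, hP, Polynomial.eval_prod]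
    exact Finset.prod_congr rfl fun β _ => by simp
  have hP0order : (P.coeff 0).order = ∑ β ∈ s, β.order := by
    rw [hP0val, LaurentSeries.order_prod _ _ fun β hβ => neg_ne_zero.mpr (hsne β hβ)]
    exact Finset.sum_congr rfl fun β _ => HahnSeries.order_neg
  have hcard : (s.card : ℤ) ≤ ∑ β ∈ s, β.order := by
    calc (s.card : ℤ) = ∑ _β ∈ s, (1 : ℤ) := by simp
    _ ≤ ∑ β ∈ s, β.order := Finset.sum_le_sum fun β hβ => hspos β hβ
  have hh0order : 0 ≤ (h.coeff 0).order := by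
    rw [hhmap, Polynomial.coeff_map]
    exact LaurentSeries.ofPowerSeries_order_nonneg _
  have hupper : (fm.coeff 0).order ≤ ((f.coeff 0).natDegree : ℤ) := by
    apply HahnSeries.order_le_of_coeff_ne_zero
    rw [hfm, Polynomial.coeff_map, hA, Polynomial.algebraMap_hahnSeries_apply,
      HahnSeries.ofPowerSeries_apply_coeff, Polynomial.coeff_coe]
    exact Polynomial.leadingCoeff_ne_zero.mpr hc0
  have hdegT : (f.coeff 0).natDegree ≤ degT f :=
    Finset.le_sup (f := fun i => (f.coeff i).natDegree)
      (Polynomial.mem_support_iff.mpr hc0)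
  have hmain : (s.card : ℤ) ≤ (degT f : ℤ) := by
    calc (s.card : ℤ) ≤ ∑ β ∈ s, β.order := hcard
    _ = (P.coeff 0).order := hP0order.symm
    _ ≤ (P.coeff 0).order + (h.coeff 0).order := le_add_of_nonneg_right hh0order
    _ = (fm.coeff 0).order := horder.symm
    _ ≤ ((f.coeff 0).natDegree : ℤ) := hupper
    _ ≤ (degT f : ℤ) := by exact_mod_cast hdegT
  exact_mod_cast hmain
end

section
/- Let q be a prime power and let f ∈ F_q[T][X] be primitive, irreducible as a polynomial in X over F_q(T), and not a constant multiple of X − u for any u ∈ F_q^×. If f splits completely over F_q((T)), then the number of distinct roots β of f in F_q((T)) with ord(β) = 0 is at most (q−1)·deg_T f. (Equivalently: if α ∉ F_q^× is totally T-adic of degree d and ℓ of its conjugates have T-adic valuation zero, then h(α) ≥ ℓ/(d(q−1)).) -/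
open Polynomial

namespace CardZeroValAux

variable {F : Type*} [Field F]

lemma coeff_natDegree_le (f : Polynomial (Polynomial F)) (i : ℕ) :
    (f.coeff i).natDegree ≤ degT f := by
  by_cases h : i ∈ f.support
  · exact Finset.le_sup (f := fun i => (f.coeff i).natDegree) h
  · rw [Polynomial.notMem_support_iff.mp h]
    simp

lemma natDegree_eval_C_le (f : Polynomial (Polynomial F)) (u : F) :
    (f.eval (Polynomial.C u)).natDegree ≤ degT f := by
  rw [Polynomial.eval_eq_sum_range]
  refine Polynomial.natDegree_sum_le_of_forall_le _ _ fun i _ => ?_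
  refine le_trans Polynomial.natDegree_mul_le ?_
  have h1 : (Polynomial.C u ^ i : Polynomial F).natDegree = 0 := by
    simp [Polynomial.natDegree_pow]
  rw [h1, add_zero]
  exact coeff_natDegree_le f i

lemma eval_C_ne_zero (f : Polynomial (Polynomial F)) (hirr : Irreducible (toRat f))
    {u : F} (hXu : ∀ c : Polynomial F,
      f ≠ Polynomial.C c * (Polynomial.X - Polynomial.C (Polynomial.C u))) :
    f.eval (Polynomial.C u) ≠ 0 := by
  intro h
  obtain ⟨g, hg⟩ := Polynomial.dvd_iff_isRoot.mpr h
  have hrat : toRat f =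
      (Polynomial.X -
        Polynomial.C (algebraMap (Polynomial F) (RatFunc F) (Polynomial.C u))) *
        toRat g := by
    simp only [toRat, hg, Polynomial.map_mul, Polynomial.map_sub, Polynomial.map_X,
      Polynomial.map_C]
  rcases hirr.isUnit_or_isUnit hrat with h2 | h2
  · exact Polynomial.not_isUnit_X_sub_C _ h2
  · have h3 := Polynomial.natDegree_eq_zero_of_isUnit h2
    rw [toRat, Polynomial.natDegree_map_eq_of_injective
      (IsFractionRing.injective (Polynomial F) (RatFunc F))] at h3
    obtain ⟨c, hc⟩ := Polynomial.natDegree_eq_zero.mp h3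
    exact hXu c (by rw [hg, ← hc]; ring)

lemma algebraMap_LS_injective :
    Function.Injective (algebraMap (Polynomial F) (LaurentSeries F)) := by
  intro a b hab
  have h : (HahnSeries.ofPowerSeries ℤ F) ((a : Polynomial F) : PowerSeries F) =
      (HahnSeries.ofPowerSeries ℤ F) ((b : Polynomial F) : PowerSeries F) := hab
  have h2 := HahnSeries.ofPowerSeries_injective h
  ext n
  have h3 := congrArg (PowerSeries.coeff n) h2
  rwa [Polynomial.coeff_coe, Polynomial.coeff_coe] at h3

lemma fiber_card_le (f : Polynomial (Polynomial F)) {u : F}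
    (he : f.eval (Polynomial.C u) ≠ 0)
    (Φ : Finset (LaurentSeries F))
    (hsub : Φ.val ≤ (f.map (algebraMap (Polynomial F) (LaurentSeries F))).roots)
    (hord : ∀ β ∈ Φ, β.order = 0) (hcoeff : ∀ β ∈ Φ, β.coeff 0 = u) :
    Φ.card ≤ degT f := by
  classical
  set ι : PowerSeries F →+* LaurentSeries F := HahnSeries.ofPowerSeries ℤ F with hι
  set ψ : Polynomial F →+* PowerSeries F :=
    (Polynomial.coeToPowerSeries.algHom F).toRingHom with hψ
  have hψapp : ∀ p : Polynomial F, ψ p = (p : PowerSeries F) := fun p => by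
    simp [hψ]
  set fR := f.map ψ with hfR
  set fK := f.map (algebraMap (Polynomial F) (LaurentSeries F)) with hfK
  have hmapfR : fR.map ι = fK := by
    rw [hfR, Polynomial.map_map]
    rfl
  -- lifts of the roots to power series
  have hlift : ∀ β ∈ Φ, ι β.powerSeriesPart = β := by
    intro β hβ
    have h1 := LaurentSeries.single_order_mul_powerSeriesPart β
    rw [hord β hβ] at h1
    simpa [hι] using h1
  set P : Polynomial (PowerSeries F) :=
    ∏ β ∈ Φ, (Polynomial.X - Polynomial.C β.powerSeriesPart) with hP
  have hPmonic : P.Monic :=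
    Polynomial.monic_prod_of_monic _ _ fun β _ => Polynomial.monic_X_sub_C _
  have hmapP : P.map ι = ∏ β ∈ Φ, (Polynomial.X - Polynomial.C β) := by
    rw [hP, Polynomial.map_prod]
    exact Finset.prod_congr rfl fun β hβ => by
      rw [Polynomial.map_sub, Polynomial.map_X, Polynomial.map_C, hlift β hβ]
  have hdvd' : P.map ι ∣ fK := by
    rw [hmapP]
    rw [Finset.prod_eq_multiset_prod]
    exact dvd_trans (Multiset.prod_dvd_prod_of_le (Multiset.map_le_map hsub))
      (Polynomial.prod_multiset_X_sub_C_dvd fK)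
  have hPdvd : P ∣ fR := by
    rw [← Polynomial.modByMonic_eq_zero_iff_dvd hPmonic]
    apply Polynomial.map_injective ι HahnSeries.ofPowerSeries_injective
    rw [Polynomial.map_modByMonic ι hPmonic, hmapfR, Polynomial.map_zero]
    exact (Polynomial.modByMonic_eq_zero_iff_dvd (hPmonic.map ι)).mpr hdvd'
  obtain ⟨h, hh⟩ := hPdvd
  set w : PowerSeries F := ψ (Polynomial.C u) with hw
  have heval : ψ (f.eval (Polynomial.C u)) = P.eval w * h.eval w := by
    rw [← Polynomial.eval_mul, ← hh, hfR, Polynomial.eval_map, hw, Polynomial.eval₂_hom]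
  have hXdvd : (PowerSeries.X : PowerSeries F) ^ Φ.card ∣ ψ (f.eval (Polynomial.C u)) := by
    refine dvd_trans ?_ ⟨h.eval w, heval⟩
    rw [hP, Polynomial.eval_prod, ← Finset.prod_const]
    refine Finset.prod_dvd_prod_of_dvd _ _ fun β hβ => ?_
    rw [Polynomial.eval_sub, Polynomial.eval_X, Polynomial.eval_C, PowerSeries.X_dvd_iff]
    have h1 : PowerSeries.constantCoeff w = u := by
      rw [hw, hψapp]
      simp
    have h2 : PowerSeries.constantCoeff β.powerSeriesPart = β.coeff 0 := by
      have h3 := LaurentSeries.powerSeriesPart_coeff β 0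
      rw [PowerSeries.coeff_zero_eq_constantCoeff] at h3
      rw [h3, hord β hβ]
      norm_num
    rw [map_sub, h1, h2, hcoeff β hβ, sub_self]
  have hXdvd' : (Polynomial.X : Polynomial F) ^ Φ.card ∣ f.eval (Polynomial.C u) := by
    rw [Polynomial.X_pow_dvd_iff]
    intro d hd
    have h4 := (PowerSeries.X_pow_dvd_iff.mp hXdvd) d hd
    rwa [hψapp, Polynomial.coeff_coe] at h4
  have h5 := Polynomial.natDegree_le_of_dvd hXdvd' he
  rw [Polynomial.natDegree_X_pow] at h5
  exact h5.trans (natDegree_eval_C_le f u)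

end CardZeroValAux

/-- The number of distinct roots of valuation zero of a completely split, primitive,
irreducible $f ∈ F_q[T][X]$ (not a constant multiple of $X - u$ for any $u ∈ F_q^×$)
is at most $(q-1)·\deg_T f$. -/
theorem card_zero_valuation_roots_le {F : Type*} [Field F] [Fintype F]
    (f : Polynomial (Polynomial F)) (hprim : f.IsPrimitive)
    (hirr : Irreducible (toRat f))
    (hXu : ∀ u : F, u ≠ 0 → ∀ c : Polynomial F,
      f ≠ Polynomial.C c * (Polynomial.X - Polynomial.C (Polynomial.C u)))
    (hsplit : SplitsCompletely f) :
    {β : LaurentSeries F |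
        (f.map (algebraMap (Polynomial F) (LaurentSeries F))).IsRoot β ∧
          β ≠ 0 ∧ β.order = 0}.ncard ≤ (Fintype.card F - 1) * degT f := by
  classical
  set fK := f.map (algebraMap (Polynomial F) (LaurentSeries F)) with hfKdef
  have hf0 : f ≠ 0 := by
    intro h
    rw [h] at hirr
    simp only [toRat, Polynomial.map_zero] at hirr
    exact not_irreducible_zero hirr
  have hfK0 : fK ≠ 0 :=
    (Polynomial.map_ne_zero_iff CardZeroValAux.algebraMap_LS_injective).mpr hf0
  set Φall := fK.roots.toFinset.filter (fun β => β ≠ 0 ∧ β.order = 0) with hΦall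
  have hset : {β : LaurentSeries F | fK.IsRoot β ∧ β ≠ 0 ∧ β.order = 0} = ↑Φall := by
    ext β
    simp only [hΦall, Set.mem_setOf_eq, Finset.coe_filter, Multiset.mem_toFinset,
      Polynomial.mem_roots hfK0, Set.mem_setOf_eq]
  rw [hset, Set.ncard_coe_finset]
  have hmem : ∀ β ∈ Φall, β.coeff 0 ∈ Finset.univ.erase (0 : F) := by
    intro β hβ
    rw [Finset.mem_erase]
    obtain ⟨hne, hord⟩ := (Finset.mem_filter.mp hβ).2
    refine ⟨?_, Finset.mem_univ _⟩
    have h1 : β.coeff β.order ≠ 0 := fun h => hne (HahnSeries.coeff_order_eq_zero.mp h)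
    rwa [hord] at h1
  rw [Finset.card_eq_sum_card_fiberwise hmem]
  have hbound : ∀ u ∈ Finset.univ.erase (0 : F),
      (Φall.filter (fun β => β.coeff 0 = u)).card ≤ degT f := by
    intro u hu
    have hu0 : u ≠ 0 := (Finset.mem_erase.mp hu).1
    refine CardZeroValAux.fiber_card_le f
      (CardZeroValAux.eval_C_ne_zero f hirr (hXu u hu0)) _ ?_ ?_ ?_
    · have step1 : (Φall.filter (fun β => β.coeff 0 = u)).val ≤ fK.roots.toFinset.val :=
        Finset.val_le_iff.mpr
          (fun β hβ => Finset.mem_of_mem_filter β ((Finset.filter_subset _ _) hβ))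
      refine step1.trans ?_
      rw [Multiset.toFinset_val]
      exact fK.roots.dedup_le
    · intro β hβ
      exact ((Finset.mem_filter.mp ((Finset.filter_subset _ _) hβ)).2).2
    · intro β hβ
      exact (Finset.mem_filter.mp hβ).2
  calc ∑ u ∈ Finset.univ.erase (0 : F), (Φall.filter fun β => β.coeff 0 = u).card
      ≤ ∑ _u ∈ Finset.univ.erase (0 : F), degT f := Finset.sum_le_sum hbound
    _ = (Fintype.card F - 1) * degT f := by
        rw [Finset.sum_const, Finset.card_erase_of_mem (Finset.mem_univ _),
          Finset.card_univ, smul_eq_mul]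
end

section
/- Let q be a prime power and let f ∈ F_q[T][X] be primitive with monic leading coefficient (as a polynomial in T), irreducible as a polynomial in X over F_q(T), split completely over F_q((T)), and satisfy deg_T f ≥ 1 and deg_X f = (q+1)·deg_T f. Put r = deg_T f. Then: (i) the leading coefficient of f (as a polynomial in X) equals T^r; and (ii) for every u ∈ F_q, the constant coefficient of f(X+u) (as a polynomial in X) equals a·T^r for some a ∈ F_q^×. -/
open Polynomial

section Aux
variable {F : Type*} [Field F]

theorem coeff_algMap (p : Polynomial F) (k : ℤ) :
    ((algebraMap (Polynomial F) (LaurentSeries F)) p).coeff k =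
      if 0 ≤ k then p.coeff k.toNat else 0 := by
  rw [Polynomial.algebraMap_hahnSeries_apply]
  split_ifs with h
  · obtain ⟨n, rfl⟩ : ∃ n : ℕ, (n : ℤ) = k := ⟨k.toNat, Int.toNat_of_nonneg h⟩
    rw [HahnSeries.ofPowerSeries_apply_coeff, Polynomial.coeff_coe, Int.toNat_natCast]
  · rw [HahnSeries.ofPowerSeries_apply, HahnSeries.embDomain_notin_image_support]
    rintro ⟨n, -, hn⟩
    exact h (hn ▸ Int.natCast_nonneg n)

theorem algMap_ne_zero {p : Polynomial F} (hp : p ≠ 0) :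
    (algebraMap (Polynomial F) (LaurentSeries F)) p ≠ 0 := fun h =>
  hp (Polynomial.algebraMap_hahnSeries_injective _ (by rw [h, map_zero]))

theorem order_algMap_nonneg {p : Polynomial F} (hp : p ≠ 0) :
    0 ≤ ((algebraMap (Polynomial F) (LaurentSeries F)) p).order := by
  by_contra hlt
  push_neg at hlt
  have := mt HahnSeries.coeff_order_eq_zero.mp (algMap_ne_zero hp)
  rw [coeff_algMap, if_neg (not_le.mpr hlt)] at this
  exact this rfl

theorem X_pow_dvd_of_le_order {p : Polynomial F} {k : ℕ}
    (h : (k : ℤ) ≤ ((algebraMap (Polynomial F) (LaurentSeries F)) p).order) :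
    Polynomial.X ^ k ∣ p := by
  rw [Polynomial.X_pow_dvd_iff]
  intro d hd
  have hcoeff := HahnSeries.coeff_eq_zero_of_lt_order
    (x := (algebraMap (Polynomial F) (LaurentSeries F)) p) (i := (d : ℤ))
    (lt_of_lt_of_le (by exact_mod_cast hd) h)
  rwa [coeff_algMap, if_pos (Int.natCast_nonneg d), Int.toNat_natCast] at hcoeff

theorem order_algMap_le_natDegree {p : Polynomial F} (hp : p ≠ 0) :
    ((algebraMap (Polynomial F) (LaurentSeries F)) p).order ≤ p.natDegree := by
  apply HahnSeries.order_le_of_coeff_ne_zero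
  rw [coeff_algMap, if_pos (Int.natCast_nonneg _), Int.toNat_natCast]
  exact Polynomial.leadingCoeff_ne_zero.mpr hp

theorem le_order_of_coeff_vanish {x : LaurentSeries F} (hx : x ≠ 0) {m : ℤ}
    (h : ∀ k < m, x.coeff k = 0) : m ≤ x.order := by
  by_contra hlt
  push_neg at hlt
  exact mt HahnSeries.coeff_order_eq_zero.mp hx (h _ hlt)

theorem order_multiset_prod (s : Multiset (LaurentSeries F)) (h : ∀ x ∈ s, x ≠ 0) :
    s.prod ≠ 0 ∧ s.prod.order = (s.map HahnSeries.order).sum := by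
  induction s using Multiset.induction_on with
  | empty => simp
  | cons a t ih =>
    have ha : a ≠ 0 := h a (Multiset.mem_cons_self a t)
    have ht := ih fun x hx => h x (Multiset.mem_cons_of_mem hx)
    refine ⟨by rw [Multiset.prod_cons]; exact mul_ne_zero ha ht.1, ?_⟩
    rw [Multiset.prod_cons, HahnSeries.order_mul ha ht.1, Multiset.map_cons,
      Multiset.sum_cons, ht.2]

theorem le_orderTop_mul {x y : LaurentSeries F} {a b : WithTop ℤ}
    (hx : a ≤ x.orderTop) (hy : b ≤ y.orderTop) : a + b ≤ (x * y).orderTop :=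
  le_trans (add_le_add hx hy) HahnSeries.orderTop_add_le_mul

theorem le_orderTop_sum {ι : Type*} {s : Finset ι} {f : ι → LaurentSeries F} {c : WithTop ℤ}
    (h : ∀ i ∈ s, c ≤ (f i).orderTop) : c ≤ (∑ i ∈ s, f i).orderTop := by
  induction s using Finset.cons_induction with
  | empty => simp
  | cons a s has ih =>
    rw [Finset.sum_cons]
    refine le_trans (le_min (h a (Finset.mem_cons_self a s))
      (ih fun i hi => h i (Finset.mem_cons_of_mem hi))) HahnSeries.min_orderTop_le_orderTop_add

theorem coeff_prod_nonneg_bound (t : Multiset (LaurentSeries F))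
    (ht : ∀ α ∈ t, 0 ≤ α.orderTop) (i : ℕ) :
    (0 : WithTop ℤ) ≤ (((t.map fun a => (X : Polynomial (LaurentSeries F)) - C a).prod.coeff i)).orderTop := by
  induction t using Multiset.induction_on generalizing i with
  | empty =>
    simp only [Multiset.map_zero, Multiset.prod_zero]
    rcases Nat.eq_zero_or_pos i with rfl | hi
    · rw [Polynomial.coeff_one, if_pos rfl]
      simp
    · rw [Polynomial.coeff_one, if_neg (by omega)]
      simp
  | cons a t ih =>
    have ha : (0 : WithTop ℤ) ≤ a.orderTop := ht a (Multiset.mem_cons_self a t)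
    have iht := fun j => ih (fun x hx => ht x (Multiset.mem_cons_of_mem hx)) j
    simp only [Multiset.map_cons, Multiset.prod_cons, sub_mul (α := Polynomial (LaurentSeries F))]
    set Q := (Multiset.map (fun a => (X : Polynomial (LaurentSeries F)) - C a) t).prod with hQ
    rw [Polynomial.coeff_sub]
    refine le_trans (le_min ?_ ?_) HahnSeries.min_orderTop_le_orderTop_sub
    · rcases Nat.eq_zero_or_pos i with rfl | hi
      · rw [Polynomial.mul_coeff_zero, Polynomial.coeff_X_zero, zero_mul]
        simp
      · obtain ⟨j, rfl⟩ := Nat.exists_eq_add_of_le hi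
        rw [add_comm 1 j, Polynomial.coeff_X_mul]
        exact iht j
    · rw [Polynomial.coeff_C_mul]
      simpa using le_orderTop_mul ha (iht i)

theorem coeff_prod_neg_bound (t : Multiset (LaurentSeries F))
    (ht : ∀ α ∈ t, α ≠ 0 ∧ α.order ≤ -1) (i : ℕ) :
    (((t.map HahnSeries.order).sum + i : ℤ) : WithTop ℤ) ≤
      (((t.map fun a => (X : Polynomial (LaurentSeries F)) - C a).prod.coeff i)).orderTop := by
  induction t using Multiset.induction_on generalizing i with
  | empty =>
    simp only [Multiset.map_zero, Multiset.prod_zero, Multiset.sum_zero, zero_add]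
    rcases Nat.eq_zero_or_pos i with rfl | hi
    · rw [Polynomial.coeff_one, if_pos rfl]
      simp
    · rw [Polynomial.coeff_one, if_neg (by omega)]
      simp
  | cons a t ih =>
    obtain ⟨ha0, ha1⟩ := ht a (Multiset.mem_cons_self a t)
    have iht := fun j => ih (fun x hx => ht x (Multiset.mem_cons_of_mem hx)) j
    have haot : (a.order : WithTop ℤ) = a.orderTop := HahnSeries.order_eq_orderTop_of_ne_zero ha0
    simp only [Multiset.map_cons, Multiset.prod_cons,
      sub_mul (α := Polynomial (LaurentSeries F)), Multiset.sum_cons]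
    set Q := (Multiset.map (fun a => (X : Polynomial (LaurentSeries F)) - C a) t).prod with hQ
    set S : ℤ := (Multiset.map HahnSeries.order t).sum with hS
    rw [Polynomial.coeff_sub]
    refine le_trans (le_min ?_ ?_) HahnSeries.min_orderTop_le_orderTop_sub
    · rcases Nat.eq_zero_or_pos i with rfl | hi
      · rw [Polynomial.mul_coeff_zero, Polynomial.coeff_X_zero, zero_mul]
        simp
      · obtain ⟨j, rfl⟩ := Nat.exists_eq_add_of_le hi
        rw [add_comm 1 j, Polynomial.coeff_X_mul]
        refine le_trans (WithTop.coe_le_coe.mpr ?_) (iht j)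
        push_cast
        omega
    · rw [Polynomial.coeff_C_mul]
      have h2 := le_orderTop_mul haot.le (iht i)
      refine le_trans (le_of_eq ?_) h2
      rw [← WithTop.coe_add]
      push_cast
      exact add_assoc _ _ _

theorem card_filter_coeff_sum [Fintype F] [DecidableEq F] (t : Multiset (LaurentSeries F)) :
    (Multiset.card t : ℤ) = ∑ u : F, (Multiset.card (t.filter fun α => α.coeff 0 = u) : ℤ) := by
  induction t using Multiset.induction_on with
  | empty => simp
  | cons a t ih =>
    simp only [Multiset.filter_cons, Multiset.card_add, Multiset.card_cons]
    push_cast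
    rw [Finset.sum_add_distrib, ← ih]
    have h1 : ∀ u : F, (Multiset.card (if a.coeff 0 = u then ({a} : Multiset (LaurentSeries F)) else 0) : ℤ)
        = if a.coeff 0 = u then (1:ℤ) else 0 := fun u => by split_ifs <;> simp
    have : (∑ u : F, (Multiset.card (if a.coeff 0 = u then ({a} : Multiset (LaurentSeries F)) else 0) : ℤ)) = 1 := by
      rw [Finset.sum_congr rfl fun u _ => h1 u, Finset.sum_ite_eq]
      simp
    omega

theorem coeff_natDegree_le_degT (f : Polynomial (Polynomial F)) (i : ℕ) :
    (f.coeff i).natDegree ≤ degT f := by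
  by_cases h : f.coeff i = 0
  · simp [h]
  · exact Finset.le_sup (f := fun i => (f.coeff i).natDegree)
      (Polynomial.mem_support_iff.mpr h)

theorem natDegree_eval_C_le (f : Polynomial (Polynomial F)) (u : F) :
    (f.eval (Polynomial.C u)).natDegree ≤ degT f := by
  rw [Polynomial.eval_eq_sum_range]
  apply Polynomial.natDegree_sum_le_of_forall_le
  intro i _
  refine le_trans (Polynomial.natDegree_mul_le) ?_
  have h1 : ((Polynomial.C u : Polynomial F) ^ i).natDegree = 0 := by
    simp [Polynomial.natDegree_pow]
  rw [h1, add_zero]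
  exact coeff_natDegree_le_degT f i

theorem eval_C_ne_zero {f : Polynomial (Polynomial F)}
    (hirr : Irreducible (toRat f)) (hdeg2 : 2 ≤ f.natDegree) (u : F) :
    f.eval (Polynomial.C u) ≠ 0 := by
  intro h
  have hinj : Function.Injective (algebraMap (Polynomial F) (RatFunc F)) :=
    RatFunc.algebraMap_injective F
  have hnd : (toRat f).natDegree = f.natDegree :=
    Polynomial.natDegree_map_eq_of_injective hinj f
  have hroot : (toRat f).IsRoot (algebraMap (Polynomial F) (RatFunc F) (Polynomial.C u)) := by
    unfold toRat
    rw [Polynomial.IsRoot, Polynomial.eval_map, Polynomial.eval₂_at_apply, h, map_zero]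
  have hdvd : (X - Polynomial.C (algebraMap (Polynomial F) (RatFunc F) (Polynomial.C u))) ∣
      toRat f := Polynomial.dvd_iff_isRoot.mpr hroot
  obtain ⟨c, hc⟩ := hdvd
  rcases hirr.isUnit_or_isUnit hc with hu | hu
  · exact Polynomial.not_isUnit_X_sub_C _ hu
  · have hc0 : c ≠ 0 := by
      intro h0
      rw [h0, mul_zero] at hc
      exact (hirr.ne_zero) hc
    have := Polynomial.natDegree_eq_zero_of_isUnit hu
    have hX : (X - Polynomial.C (algebraMap (Polynomial F) (RatFunc F)
        (Polynomial.C u))).natDegree = 1 := Polynomial.natDegree_X_sub_C _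
    have hmul : (toRat f).natDegree = 1 + 0 := by
      rw [hc, Polynomial.natDegree_mul (Polynomial.X_sub_C_ne_zero _) hc0, hX, this]
    omega

theorem eq_C_mul_X_pow_of {p : Polynomial F} {r : ℕ} (hp : p ≠ 0)
    (hle : p.natDegree ≤ r) (hdvd : Polynomial.X ^ r ∣ p) :
    ∃ a : F, a ≠ 0 ∧ p = Polynomial.C a * Polynomial.X ^ r := by
  obtain ⟨c, hc⟩ := hdvd
  have hc0 : c ≠ 0 := fun h => hp (by rw [hc, h, mul_zero])
  have hXr : (Polynomial.X : Polynomial F) ^ r ≠ 0 := pow_ne_zero r Polynomial.X_ne_zero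
  have hnd : p.natDegree = r + c.natDegree := by
    rw [hc, Polynomial.natDegree_mul hXr hc0, Polynomial.natDegree_X_pow]
  obtain ⟨a, ha⟩ := Polynomial.natDegree_eq_zero.mp (by omega : c.natDegree = 0)
  refine ⟨a, fun h0 => hc0 (by rw [← ha, h0, map_zero]), ?_⟩
  rw [hc, ← ha, mul_comm]

theorem eq_X_pow_of_monic {p : Polynomial F} {r : ℕ} (hm : p.Monic)
    (hle : p.natDegree ≤ r) (hdvd : Polynomial.X ^ r ∣ p) : p = Polynomial.X ^ r := by
  obtain ⟨a, ha0, ha⟩ := eq_C_mul_X_pow_of hm.ne_zero hle hdvd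
  have : p.leadingCoeff = a := by rw [ha, Polynomial.leadingCoeff_C_mul_X_pow]
  have ha1 : a = 1 := by rw [← this]; exact hm.leadingCoeff
  rw [ha, ha1, map_one, one_mul]

end Aux

/-- Leading and constant coefficients of the minimal polynomial of a totally
$T$-adic function of minimal height $1/(q+1)$: the leading coefficient (in $X$)
equals $T^r$ and, for each $u ∈ F_q$, the constant coefficient of $f(X+u)$ equals
$a·T^r$ for some nonzero $a ∈ F_q$, where $r = \deg_T f$. -/
theorem minimal_height_coefficients {F : Type*} [Field F] [Fintype F]
    (f : Polynomial (Polynomial F)) (hprim : f.IsPrimitive)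
    (hmon : f.leadingCoeff.Monic)
    (hirr : Irreducible (toRat f))
    (hsplit : SplitsCompletely f)
    (hT : 1 ≤ degT f)
    (hdeg : f.natDegree = (Fintype.card F + 1) * degT f) :
    f.leadingCoeff = Polynomial.X ^ degT f ∧
      ∀ u : F, ∃ a : F, a ≠ 0 ∧
        (f.comp (Polynomial.X + Polynomial.C (Polynomial.C u))).coeff 0
          = Polynomial.C a * Polynomial.X ^ degT f := by
  classical
  set r : ℕ := degT f with hrdef
  set q : ℕ := Fintype.card F with hqdef
  have hq1 : 1 ≤ q := Fintype.card_pos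
  have hlc0 : f.leadingCoeff ≠ 0 := hmon.ne_zero
  have hf0 : f ≠ 0 := Polynomial.leadingCoeff_ne_zero.mp hlc0
  set n : ℕ := f.natDegree with hndef
  have hn2 : 2 ≤ n := by
    rw [hdeg]
    calc 2 = 2 * 1 := by ring
    _ ≤ (q + 1) * r := Nat.mul_le_mul (by omega) hT
  set ι : Polynomial F →+* LaurentSeries F := (algebraMap (Polynomial F) (LaurentSeries F))
    with hιdef
  have hinj : Function.Injective ι := Polynomial.algebraMap_hahnSeries_injective _
  set g : Polynomial (LaurentSeries F) := f.map ι with hgdef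
  have hg0 : g ≠ 0 := (Polynomial.map_ne_zero_iff hinj).mpr hf0
  have hgnd : g.natDegree = n := Polynomial.natDegree_map_eq_of_injective hinj f
  have hsplitid : Polynomial.Splits g :=
    hsplit
  set R : Multiset (LaurentSeries F) := g.roots with hRdef
  have hcard : Multiset.card R = n := by
    rw [← hgnd]; exact (Polynomial.splits_iff_card_roots).mp hsplitid
  have hglc : g.leadingCoeff = ι f.leadingCoeff := by
    rw [Polynomial.leadingCoeff, hgnd, hgdef, Polynomial.coeff_map,
      Polynomial.leadingCoeff, ← hndef]
  set L : LaurentSeries F := ι f.leadingCoeff with hLdef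
  have hL0 : L ≠ 0 := algMap_ne_zero hlc0
  have hgfact : g = Polynomial.C L * (R.map fun a => X - Polynomial.C a).prod := by
    rw [← hglc]; exact hsplitid.eq_prod_roots
  -- roots are nonzero
  have hc00 : f.coeff 0 ≠ 0 := by
    have := eval_C_ne_zero hirr hn2 0
    rwa [map_zero, ← Polynomial.coeff_zero_eq_eval_zero] at this
  have hR0 : ∀ α ∈ R, α ≠ 0 := by
    intro α hα h0
    have hroot := Polynomial.isRoot_of_mem_roots hα
    rw [Polynomial.IsRoot, h0, ← Polynomial.coeff_zero_eq_eval_zero, hgdef,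
      Polynomial.coeff_map] at hroot
    exact algMap_ne_zero hc00 hroot
  -- partition of roots
  set Rneg : Multiset (LaurentSeries F) := R.filter fun α => α.order < 0 with hRnegdef
  set Rrest : Multiset (LaurentSeries F) := R.filter fun α => ¬ α.order < 0 with hRrestdef
  have hRsplit : Rneg + Rrest = R := Multiset.filter_add_not _ R
  set m : ℕ := Multiset.card Rneg with hmdef
  set mr : ℕ := Multiset.card Rrest with hmrdef
  have hmn : m + mr = n := by
    rw [hmdef, hmrdef, ← Multiset.card_add, hRsplit, hcard]
  set s : ℤ := -(Rneg.map HahnSeries.order).sum with hsdef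
  have hnegsum : (Rneg.map HahnSeries.order).sum = -s := by rw [hsdef, neg_neg]
  have hRneg1 : ∀ α ∈ Rneg, α ≠ 0 ∧ α.order ≤ -1 := by
    intro α hα
    exact ⟨hR0 α (Multiset.mem_of_mem_filter hα), by
      have := (Multiset.mem_filter.mp hα).2; omega⟩
  have hRrestpos : ∀ α ∈ Rrest, 0 ≤ α.orderTop := by
    intro α hα
    have := (Multiset.mem_filter.mp hα).2
    exact HahnSeries.zero_le_orderTop_iff.mpr (by omega)
  -- m ≤ s
  have hms : (m : ℤ) ≤ s := by
    have hb : ∀ x ∈ Rneg.map (fun α => -HahnSeries.order α), (1:ℤ) ≤ x := by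
      intro x hx
      obtain ⟨α, hα, rfl⟩ := Multiset.mem_map.mp hx
      have := (hRneg1 α hα).2; omega
    have h1 := Multiset.card_nsmul_le_sum hb
    have h2 : (Rneg.map (fun α => -HahnSeries.order α)).sum = s := by
      have h0 : (Rneg.map (fun α => -HahnSeries.order α)).sum
          + (Rneg.map HahnSeries.order).sum = 0 := by
        rw [← Multiset.sum_map_add]; simp
      omega
    rw [Multiset.card_map, nsmul_eq_mul, mul_one, h2] at h1
    exact h1
  set d : ℤ := L.order with hddef
  have hdr : d ≤ (r : ℤ) := by
    have h1 := order_algMap_le_natDegree hlc0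
    have h2 := coeff_natDegree_le_degT f f.natDegree
    rw [← Polynomial.leadingCoeff] at h2
    calc d ≤ (f.leadingCoeff.natDegree : ℤ) := h1
    _ ≤ (r : ℤ) := by exact_mod_cast h2
  -- Step A : s ≤ d
  set Pneg : Polynomial (LaurentSeries F) := (Rneg.map fun a => X - Polynomial.C a).prod
    with hPnegdef
  set Prest : Polynomial (LaurentSeries F) := (Rrest.map fun a => X - Polynomial.C a).prod
    with hPrestdef
  have hP : (R.map fun a => X - Polynomial.C a).prod = Pneg * Prest := by
    rw [← hRsplit, Multiset.map_add, Multiset.prod_add]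
  have hPrestMonic : Prest.Monic := by
    apply Polynomial.monic_multiset_prod_of_monic
    intro a _
    exact Polynomial.monic_X_sub_C a
  have hPrestDeg : Prest.natDegree = mr := by
    rw [hPrestdef, Polynomial.natDegree_multiset_prod_of_monic, Multiset.map_map]
    · simp [Function.comp, Polynomial.natDegree_X_sub_C, hmrdef]
    · intro p hp
      obtain ⟨a, _, rfl⟩ := Multiset.mem_map.mp hp
      exact Polynomial.monic_X_sub_C a
  have hPrestmr : Prest.coeff mr = 1 := by
    rw [← hPrestDeg]
    exact hPrestMonic.coeff_natDegree
  -- the constant coefficient of Pneg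
  have hPneg0 : Pneg.coeff 0 = (Rneg.map fun α => -α).prod := by
    rw [hPnegdef, Polynomial.coeff_zero_eq_eval_zero, Polynomial.eval_multiset_prod,
      Multiset.map_map]
    congr 1
    exact Multiset.map_congr rfl fun a _ => by simp
  have hT0 := order_multiset_prod (Rneg.map fun α => -α) (by
    intro x hx
    obtain ⟨α, hα, rfl⟩ := Multiset.mem_map.mp hx
    exact neg_ne_zero.mpr (hRneg1 α hα).1)
  have hT0ord : (Pneg.coeff 0).order = -s := by
    rw [hPneg0, hT0.2, Multiset.map_map]
    rw [← hnegsum]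
    congr 1
    exact Multiset.map_congr rfl fun a _ => by simp [HahnSeries.order_neg]
  have hT00 : Pneg.coeff 0 ≠ 0 := by rw [hPneg0]; exact hT0.1
  -- the distinguished coefficient of the product
  have hxeq : (Pneg * Prest).coeff mr = Pneg.coeff 0
      + ∑ p ∈ (Finset.HasAntidiagonal.antidiagonal mr).erase (0, mr), Pneg.coeff p.1 * Prest.coeff p.2 := by
    rw [Polynomial.coeff_mul, ← Finset.add_sum_erase _ _
      ((Finset.HasAntidiagonal.mem_antidiagonal (a := ((0:ℕ), mr))).mpr (zero_add mr)), hPrestmr, mul_one]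
  have hrest : ∀ p ∈ (Finset.HasAntidiagonal.antidiagonal mr).erase (0, mr),
      ((-s + 1 : ℤ) : WithTop ℤ) ≤ (Pneg.coeff p.1 * Prest.coeff p.2).orderTop := by
    rintro ⟨i, j⟩ hp
    have hij : i + j = mr := Finset.HasAntidiagonal.mem_antidiagonal.mp (Finset.mem_of_mem_erase hp)
    have hi1 : 1 ≤ i := by
      rcases Nat.eq_zero_or_pos i with rfl | h
      · have hjmr : j = mr := by omega
        subst hjmr
        exact absurd rfl (Finset.ne_of_mem_erase hp)
      · exact h
    have hb := le_orderTop_mul (coeff_prod_neg_bound Rneg hRneg1 i)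
      (coeff_prod_nonneg_bound Rrest hRrestpos j)
    rw [add_zero] at hb
    refine le_trans (WithTop.coe_le_coe.mpr ?_) hb
    rw [hnegsum]
    have hi' : (1:ℤ) ≤ (i:ℤ) := by exact_mod_cast hi1
    linarith
  have hrestsum : ((-s + 1 : ℤ) : WithTop ℤ) ≤
      (∑ p ∈ (Finset.HasAntidiagonal.antidiagonal mr).erase (0, mr),
        Pneg.coeff p.1 * Prest.coeff p.2).orderTop := le_orderTop_sum hrest
  have hxcoeff : ((Pneg * Prest).coeff mr).coeff (-s) = (Pneg.coeff 0).coeff (-s) := by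
    rw [hxeq, HahnSeries.coeff_add,
      HahnSeries.coeff_eq_zero_of_lt_orderTop (lt_of_lt_of_le
        (WithTop.coe_lt_coe.mpr (by omega)) hrestsum), add_zero]
  have hxne : ((Pneg * Prest).coeff mr).coeff (-s) ≠ 0 := by
    rw [hxcoeff, ← hT0ord]
    exact mt HahnSeries.coeff_order_eq_zero.mp hT00
  have hx0 : (Pneg * Prest).coeff mr ≠ 0 := HahnSeries.ne_zero_of_coeff_ne_zero hxne
  have hxordle : ((Pneg * Prest).coeff mr).order ≤ -s :=
    HahnSeries.order_le_of_coeff_ne_zero hxne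
  have hxordge : -s ≤ ((Pneg * Prest).coeff mr).order := by
    apply le_order_of_coeff_vanish hx0
    intro k hk
    rw [hxeq, HahnSeries.coeff_add,
      HahnSeries.coeff_eq_zero_of_lt_order (hT0ord ▸ hk),
      HahnSeries.coeff_eq_zero_of_lt_orderTop (lt_of_lt_of_le
        (WithTop.coe_lt_coe.mpr (by omega)) hrestsum), add_zero]
  have hxord : ((Pneg * Prest).coeff mr).order = -s := le_antisymm hxordle hxordge
  have hgcmr : ι (f.coeff mr) = L * (Pneg * Prest).coeff mr := by
    rw [← Polynomial.coeff_map (f := ι), ← hgdef, hgfact, hP, Polynomial.coeff_C_mul]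
  have hfmr0 : f.coeff mr ≠ 0 := by
    intro h0
    rw [h0, map_zero] at hgcmr
    exact mul_ne_zero hL0 hx0 hgcmr.symm
  have hsd : s ≤ d := by
    have h1 : (ι (f.coeff mr)).order = d + -s := by
      rw [hgcmr, HahnSeries.order_mul hL0 hx0, hxord]
    have h2 := order_algMap_nonneg hfmr0
    rw [h1] at h2
    omega
  -- Step B : per-element bounds
  set w : F → ℤ := fun u => ((algebraMap (Polynomial F) (LaurentSeries F))
    (f.eval (Polynomial.C u))).order with hwdef
  have hB : ∀ u : F,
      (Multiset.card (Rrest.filter fun α => α.coeff 0 = u) : ℤ) ≤ w u - (d - s)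
      ∧ w u ≤ (r : ℤ) := by
    intro u
    have hpu0 : f.eval (Polynomial.C u) ≠ 0 := eval_C_ne_zero hirr hn2 u
    set c : LaurentSeries F := ι (Polynomial.C u) with hcdef
    have hgeval : ι (f.eval (Polynomial.C u)) = L * (R.map fun α => c - α).prod := by
      have h1 : Polynomial.eval c g = ι (f.eval (Polynomial.C u)) := by
        rw [hgdef, Polynomial.eval_map]
        exact Polynomial.eval₂_at_apply ι (Polynomial.C u)
      rw [← h1, hgfact, Polynomial.eval_mul, Polynomial.eval_C,
        Polynomial.eval_multiset_prod, Multiset.map_map]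
      congr 2
      exact Multiset.map_congr rfl fun a _ => by simp
    have hfac0 : ∀ y ∈ R.map (fun α => c - α), y ≠ 0 := by
      intro y hy hy0
      exact algMap_ne_zero hpu0 (by rw [hgeval, Multiset.prod_eq_zero (hy0 ▸ hy), mul_zero])
    have hprod := order_multiset_prod _ hfac0
    have hccoeff : ∀ k : ℤ, k < 0 → c.coeff k = 0 := by
      intro k hk
      rw [hcdef, coeff_algMap, if_neg (by omega)]
    have hwoeq : w u = d + (R.map fun α => (c - α).order).sum := by
      rw [hwdef]
      simp only
      rw [hgeval, HahnSeries.order_mul hL0 (order_multiset_prod _ hfac0).1, hprod.2,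
        Multiset.map_map]
      rfl
    -- lower bounds on factor orders
    have hfne : ∀ α ∈ R, c - α ≠ 0 := fun α hα =>
      hfac0 _ (Multiset.mem_map_of_mem _ hα)
    have hlow1 : ∀ α ∈ Rneg, α.order ≤ (c - α).order := by
      intro α hα
      apply le_order_of_coeff_vanish (hfne α (Multiset.mem_of_mem_filter hα))
      intro k hk
      have hαo := (hRneg1 α hα).2
      rw [HahnSeries.coeff_sub, hccoeff k (by omega),
        HahnSeries.coeff_eq_zero_of_lt_order hk, sub_zero]
    have hlow2 : ∀ α ∈ Rrest, 0 ≤ (c - α).order := by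
      intro α hα
      apply le_order_of_coeff_vanish (hfne α (Multiset.mem_of_mem_filter hα))
      intro k hk
      have hαo : 0 ≤ α.order := by
        have := (Multiset.mem_filter.mp hα).2; omega
      rw [HahnSeries.coeff_sub, hccoeff k (by omega),
        HahnSeries.coeff_eq_zero_of_lt_order (by omega), sub_zero]
    have hlow3 : ∀ α ∈ Rrest, α.coeff 0 = u → 1 ≤ (c - α).order := by
      intro α hα hα0
      apply le_order_of_coeff_vanish (hfne α (Multiset.mem_of_mem_filter hα))
      intro k hk
      have hαo : 0 ≤ α.order := by
        have := (Multiset.mem_filter.mp hα).2; omega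
      rcases lt_or_eq_of_le (by omega : k ≤ 0) with hk0 | rfl
      · rw [HahnSeries.coeff_sub, hccoeff k (by omega),
          HahnSeries.coeff_eq_zero_of_lt_order (by omega), sub_zero]
      · rw [HahnSeries.coeff_sub, hcdef, coeff_algMap, if_pos le_rfl]
        simp [hα0]
    -- summing up
    have hsplitsum : (R.map fun α => (c - α).order).sum =
        (Rneg.map fun α => (c - α).order).sum + (Rrest.map fun α => (c - α).order).sum := by
      rw [← hRsplit, Multiset.map_add, Multiset.sum_add]
    have hs1 : (Rneg.map HahnSeries.order).sum ≤ (Rneg.map fun α => (c - α).order).sum :=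
      Multiset.sum_map_le_sum_map _ _ hlow1
    have hs2 : (Multiset.card (Rrest.filter fun α => α.coeff 0 = u) : ℤ) ≤
        (Rrest.map fun α => (c - α).order).sum := by
      have hrr : (Rrest.filter fun α => α.coeff 0 = u)
          + (Rrest.filter fun α => ¬ α.coeff 0 = u) = Rrest :=
        Multiset.filter_add_not _ _
      have hsum' : (Rrest.map fun α => (c - α).order).sum =
          ((Rrest.filter fun α => α.coeff 0 = u).map fun α => (c - α).order).sum
          + ((Rrest.filter fun α => ¬ α.coeff 0 = u).map fun α => (c - α).order).sum := by
        conv_lhs => rw [← hrr]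
        rw [Multiset.map_add, Multiset.sum_add]
      rw [hsum']
      have hpart1 : (Multiset.card (Rrest.filter fun α => α.coeff 0 = u) : ℤ) ≤
          ((Rrest.filter fun α => α.coeff 0 = u).map fun α => (c - α).order).sum := by
        have hb : ∀ x ∈ (Rrest.filter fun α => α.coeff 0 = u).map
            (fun α => (c - α).order), (1:ℤ) ≤ x := by
          intro x hx
          obtain ⟨α, hα, rfl⟩ := Multiset.mem_map.mp hx
          exact hlow3 α (Multiset.mem_of_mem_filter hα) (Multiset.mem_filter.mp hα).2
        have h1 := Multiset.card_nsmul_le_sum hb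
        rwa [Multiset.card_map, nsmul_eq_mul, mul_one] at h1
      have hpart2 : (0:ℤ) ≤
          ((Rrest.filter fun α => ¬ α.coeff 0 = u).map fun α => (c - α).order).sum := by
        have hb : ∀ x ∈ (Rrest.filter fun α => ¬ α.coeff 0 = u).map
            (fun α => (c - α).order), (0:ℤ) ≤ x := by
          intro x hx
          obtain ⟨α, hα, rfl⟩ := Multiset.mem_map.mp hx
          exact hlow2 α (Multiset.mem_of_mem_filter hα)
        have h1 := Multiset.card_nsmul_le_sum hb
        rwa [smul_zero] at h1
      omega
    constructor
    · rw [hwoeq, hsplitsum]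
      have := hnegsum
      omega
    · have h1 := order_algMap_le_natDegree hpu0
      have h2 := natDegree_eval_C_le f u
      rw [hwdef]
      simp only
      calc ((algebraMap (Polynomial F) (LaurentSeries F)) (f.eval (Polynomial.C u))).order
          ≤ ((f.eval (Polynomial.C u)).natDegree : ℤ) := h1
      _ ≤ (r : ℤ) := by exact_mod_cast h2
  -- counting roots
  have hcount : (n : ℤ) = (m : ℤ) +
      ∑ u : F, (Multiset.card (Rrest.filter fun α => α.coeff 0 = u) : ℤ) := by
    have h1 := card_filter_coeff_sum (F := F) Rrest
    have h2 : (m : ℤ) + (mr : ℤ) = n := by exact_mod_cast hmn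
    omega
  -- final arithmetic
  have hn' : (n : ℤ) = ((q : ℤ) + 1) * (r : ℤ) := by exact_mod_cast hdeg
  have hsumw_le : ∑ u : F, w u ≤ (q : ℤ) * (r : ℤ) := by
    calc ∑ u : F, w u ≤ ∑ _u : F, (r : ℤ) := Finset.sum_le_sum fun u _ => (hB u).2
    _ = (q : ℤ) * (r : ℤ) := by
      rw [Finset.sum_const, Finset.card_univ, nsmul_eq_mul, hqdef]
  have hkey : (n : ℤ) ≤ s + (∑ u : F, w u) - (q : ℤ) * (d - s) := by
    have h1 : (∑ u : F, (Multiset.card (Rrest.filter fun α => α.coeff 0 = u) : ℤ)) ≤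
        ∑ u : F, (w u - (d - s)) := Finset.sum_le_sum fun u _ => by
      have := (hB u).1; omega
    have h2 : ∑ u : F, (w u - (d - s)) = (∑ u : F, w u) - (q : ℤ) * (d - s) := by
      rw [Finset.sum_sub_distrib, Finset.sum_const, Finset.card_univ, nsmul_eq_mul, hqdef]
    rw [hcount]
    linarith [hms]
  have hqds : (0 : ℤ) ≤ (q : ℤ) * (d - s) := by
    apply mul_nonneg
    · positivity
    · omega
  have hdreq : d = (r : ℤ) := by linarith
  have hds0 : (q : ℤ) * (d - s) = 0 := by
    -- since r ≤ d - q * (d - s) coming from the chain, and d = r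
    linarith
  have hsdeq : s = d := by
    rcases mul_eq_zero.mp hds0 with h | h
    · exfalso
      have : (1 : ℤ) ≤ (q : ℤ) := by exact_mod_cast hq1
      omega
    · omega
  have hsumw : ∑ u : F, w u = (q : ℤ) * (r : ℤ) := by
    apply le_antisymm hsumw_le
    have := hkey
    rw [hsdeq, hdreq] at this
    linarith
  have hwu : ∀ u : F, w u = (r : ℤ) := by
    have := (Finset.sum_eq_sum_iff_of_le (fun u (_ : u ∈ Finset.univ) => (hB u).2)).mp
    intro u
    refine this ?_ u (Finset.mem_univ u)
    rw [hsumw, Finset.sum_const, Finset.card_univ, nsmul_eq_mul, hqdef]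
  -- conclusions
  constructor
  · apply eq_X_pow_of_monic hmon
    · have h2 := coeff_natDegree_le_degT f f.natDegree
      rwa [← Polynomial.leadingCoeff] at h2
    · apply X_pow_dvd_of_le_order
      rw [← hddef, hdreq]
  · intro u
    have hpu0 : f.eval (Polynomial.C u) ≠ 0 := eval_C_ne_zero hirr hn2 u
    have hdvd : Polynomial.X ^ r ∣ f.eval (Polynomial.C u) := by
      apply X_pow_dvd_of_le_order
      rw [show ((algebraMap (Polynomial F) (LaurentSeries F)) (f.eval (Polynomial.C u))).order
        = w u from rfl, hwu u]
    obtain ⟨a, ha0, ha⟩ := eq_C_mul_X_pow_of hpu0 (natDegree_eval_C_le f u) hdvd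
    refine ⟨a, ha0, ?_⟩
    have hcomp : (f.comp (Polynomial.X + Polynomial.C (Polynomial.C u))).coeff 0
        = f.eval (Polynomial.C u) := by
      rw [Polynomial.coeff_zero_eq_eval_zero, Polynomial.eval_comp]
      simp
    rw [hcomp, ha]
end

section
/- Let q be an odd prime power and let c ∈ F_q be a nonsquare. Then the polynomial f(X) = T·X^{q+1} + X^q − X − c·T ∈ F_q[T][X] is irreducible as a polynomial in X over F_q(T) and splits completely over F_q((T)). In particular, each of its roots is a totally T-adic function of degree q+1 and height 1/(q+1) over F_q(T). -/
open Polynomial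

/-! ### Auxiliary: adic completeness of power series and a non-monic Hensel lemma -/

lemma MHE.mem_span_X_pow {R : Type*} [CommRing R] {n : ℕ} {x : PowerSeries R} :
    x ∈ (Ideal.span {(PowerSeries.X : PowerSeries R)}) ^ n ↔ (PowerSeries.X : PowerSeries R) ^ n ∣ x := by
  rw [Ideal.span_singleton_pow, Ideal.mem_span_singleton]

instance MHE.psAdicComplete {R : Type*} [CommRing R] :
    IsAdicComplete (Ideal.span {(PowerSeries.X : PowerSeries R)}) (PowerSeries R) where
  haus' x hx := by
    ext i
    have := hx (i + 1)
    rw [SModEq.zero, ← Ideal.one_eq_top, Ideal.smul_eq_mul, mul_one, MHE.mem_span_X_pow,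
      PowerSeries.X_pow_dvd_iff] at this
    simpa using this i (Nat.lt_succ_self i)
  prec' f hf := by
    refine ⟨PowerSeries.mk fun i => PowerSeries.coeff i (f (i + 1)), fun n => ?_⟩
    rw [SModEq.sub_mem, ← Ideal.one_eq_top, Ideal.smul_eq_mul, mul_one, MHE.mem_span_X_pow,
      PowerSeries.X_pow_dvd_iff]
    intro i hi
    have h := hf (show i + 1 ≤ n from hi)
    rw [SModEq.sub_mem, ← Ideal.one_eq_top, Ideal.smul_eq_mul, mul_one, MHE.mem_span_X_pow,
      PowerSeries.X_pow_dvd_iff] at h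
    have := h i (Nat.lt_succ_self i)
    rw [map_sub] at this ⊢
    simp only [PowerSeries.coeff_mk]
    rw [sub_eq_zero] at this ⊢
    exact this.symm

/-- Hensel's lemma for adically complete rings, without the monicity assumption
(the proof is the Newton-iteration proof from Mathlib's `IsAdicComplete.henselianRing`). -/
theorem MHE.hensel {R : Type*} [CommRing R] (I : Ideal R) [IsAdicComplete I R]
    (f : R[X]) (a₀ : R) (h₁ : f.eval a₀ ∈ I)
    (h₂ : IsUnit (Ideal.Quotient.mk I (f.derivative.eval a₀))) :
    ∃ a : R, f.IsRoot a ∧ a - a₀ ∈ I := by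
  classical
  let f' := derivative f
  let c : ℕ → R := fun n => Nat.recOn n a₀ fun _ b => b - f.eval b * Ring.inverse (f'.eval b)
  have hc : ∀ n, c (n + 1) = c n - f.eval (c n) * Ring.inverse (f'.eval (c n)) := by
    intro n
    simp only [c, Nat.rec_add_one]
  have hc_mod : ∀ n, c n ≡ a₀ [SMOD I] := by
    intro n
    induction' n with n ih
    · rfl
    rw [hc, sub_eq_add_neg, ← add_zero a₀]
    refine ih.add ?_
    rw [SModEq.zero, Ideal.neg_mem_iff]
    refine I.mul_mem_right _ ?_
    rw [← SModEq.zero] at h₁ ⊢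
    exact (ih.eval f).trans h₁
  have hf'c : ∀ n, IsUnit (f'.eval (c n)) := by
    intro n
    haveI := isLocalHom_of_le_jacobson_bot I (IsAdicComplete.le_jacobson_bot I)
    apply IsUnit.of_map (Ideal.Quotient.mk I)
    convert h₂ using 1
    exact SModEq.def.mp ((hc_mod n).eval _)
  have hfcI : ∀ n, f.eval (c n) ∈ I ^ (n + 1) := by
    intro n
    induction' n with n ih
    · simpa only [Nat.rec_zero, zero_add, pow_one] using! h₁
    rw [← taylor_eval_sub (c n), hc, sub_eq_add_neg, sub_eq_add_neg,
      add_neg_cancel_comm]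
    rw [eval_eq_sum, sum_over_range' _ _ _ (lt_add_of_pos_right _ zero_lt_two), ←
      Finset.sum_range_add_sum_Ico _ (Nat.le_add_left _ _)]
    swap
    · intro i
      rw [zero_mul]
    refine Ideal.add_mem _ ?_ ?_
    · erw [Finset.sum_range_succ]
      rw [Finset.range_one, Finset.sum_singleton,
        taylor_coeff_zero, taylor_coeff_one, pow_zero, pow_one, mul_one, mul_neg,
        mul_left_comm, Ring.mul_inverse_cancel _ (hf'c n), mul_one, add_neg_cancel]
      exact Ideal.zero_mem _
    · refine Submodule.sum_mem _ ?_
      simp only [Finset.mem_Ico]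
      rintro i ⟨h2i, _⟩
      have aux : n + 2 ≤ i * (n + 1) := by trans 2 * (n + 1) <;> nlinarith only [h2i]
      refine Ideal.mul_mem_left _ _ (Ideal.pow_le_pow_right aux ?_)
      rw [pow_mul']
      exact Ideal.pow_mem_pow ((Ideal.neg_mem_iff _).2 <| Ideal.mul_mem_right _ _ ih) _
  have aux : ∀ m n, m ≤ n → c m ≡ c n [SMOD (I ^ m • ⊤ : Ideal R)] := by
    intro m n hmn
    rw [← Ideal.one_eq_top, Ideal.smul_eq_mul, mul_one]
    obtain ⟨k, rfl⟩ := Nat.exists_eq_add_of_le hmn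
    clear hmn
    induction' k with k ih
    · rfl
    rw [← add_assoc, hc, ← add_zero (c m), sub_eq_add_neg]
    refine ih.add ?_
    symm
    rw [SModEq.zero, Ideal.neg_mem_iff]
    refine Ideal.mul_mem_right _ _ (Ideal.pow_le_pow_right ?_ (hfcI _))
    rw [add_assoc]
    exact le_self_add
  obtain ⟨a, ha⟩ := IsPrecomplete.prec' c (aux _ _)
  refine ⟨a, ?_, ?_⟩
  · show f.IsRoot a
    suffices ∀ n, f.eval a ≡ 0 [SMOD (I ^ n • ⊤ : Ideal R)] by exact IsHausdorff.haus' _ this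
    intro n
    specialize ha n
    rw [← Ideal.one_eq_top, Ideal.smul_eq_mul, mul_one] at ha ⊢
    refine (ha.symm.eval f).trans ?_
    rw [SModEq.zero]
    exact Ideal.pow_le_pow_right le_self_add (hfcI _)
  · show a - a₀ ∈ I
    specialize ha (0 + 1)
    rw [hc, pow_one, ← Ideal.one_eq_top, Ideal.smul_eq_mul, mul_one, sub_eq_add_neg] at ha
    rw [← SModEq.sub_mem, ← add_zero a₀]
    refine ha.symm.trans (SModEq.rfl.add ?_)
    rw [SModEq.zero, Ideal.neg_mem_iff]
    exact Ideal.mul_mem_right _ _ h₁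

/-! ### Auxiliary: swapping the two variables of `F[T][X]` -/

/-- The ring homomorphism of `F[T][X]` swapping the two variables. -/
noncomputable def MHE.swapHom (F : Type*) [CommRing F] :
    Polynomial (Polynomial F) →+* Polynomial (Polynomial F) :=
  eval₂RingHom (eval₂RingHom (C.comp C) X) (C X)

@[simp] lemma MHE.swapHom_C {F : Type*} [CommRing F] (p : Polynomial F) :
    MHE.swapHom F (C p) = p.eval₂ (C.comp C) X := by
  simp [MHE.swapHom, coe_eval₂RingHom]

@[simp] lemma MHE.swapHom_X {F : Type*} [CommRing F] :
    MHE.swapHom F (X : Polynomial (Polynomial F)) = C X := by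
  simp [MHE.swapHom]

@[simp] lemma MHE.swapHom_CC {F : Type*} [CommRing F] (a : F) :
    MHE.swapHom F (C (C a)) = C (C a) := by simp

@[simp] lemma MHE.swapHom_CX {F : Type*} [CommRing F] :
    MHE.swapHom F (C (X : Polynomial F)) = X := by simp

lemma MHE.swapHom_comp_swapHom {F : Type*} [CommRing F] :
    (MHE.swapHom F).comp (MHE.swapHom F) = RingHom.id _ := by
  apply Polynomial.ringHom_ext
  · intro p
    induction p using Polynomial.induction_on with
    | C a => simp
    | add p q hp hq => simp_all [map_add]
    | monomial n a ih => simp_all [map_mul, map_pow]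
  · simp

/-- Swapping the two variables of `F[T][X]`, as a ring equivalence. -/
noncomputable def MHE.swapEquiv (F : Type*) [CommRing F] :
    Polynomial (Polynomial F) ≃+* Polynomial (Polynomial F) :=
  RingEquiv.ofRingHom (MHE.swapHom F) (MHE.swapHom F)
    MHE.swapHom_comp_swapHom MHE.swapHom_comp_swapHom

/-! ### Auxiliary: coprimality and irreducibility of the swapped polynomial -/

lemma MHE.key_coprime {F : Type*} [Field F] [Fintype F] (c : F) (hc : ¬ IsSquare c)
    (r : Polynomial F)
    (hA : r ∣ X ^ (Fintype.card F + 1) - C c) (hB : r ∣ X ^ Fintype.card F - X) :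
    IsUnit r := by
  set q := Fintype.card F with hq
  by_contra hr
  have hr0 : r ≠ 0 := by
    rintro rfl
    exact X_pow_sub_C_ne_zero (Nat.succ_pos q) c (zero_dvd_iff.mp hA)
  obtain ⟨p, hp_irr, hpr⟩ := WfDvdMonoid.exists_irreducible_factor hr hr0
  have hp_prime : Prime p := hp_irr.prime
  have hmonic : (X ^ q - X : F[X]).Monic := by
    apply monic_X_pow_sub
    calc (X : F[X]).degree = 1 := degree_X
    _ < q := by exact_mod_cast Fintype.one_lt_card
  have hcard : ((X ^ q - X : F[X]).roots).card = (X ^ q - X : F[X]).natDegree := by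
    rw [FiniteField.roots_X_pow_card_sub_X, FiniteField.X_pow_card_sub_X_natDegree_eq F
      Fintype.one_lt_card]
    simp
  have hprod := prod_multiset_X_sub_C_of_monic_of_roots_card_eq hmonic hcard
  have hpdvd : p ∣ ((X ^ q - X : F[X]).roots.map fun a => X - C a).prod := by
    rw [hprod]; exact hpr.trans hB
  obtain ⟨g, hg_mem, hpg⟩ := hp_prime.exists_mem_multiset_dvd hpdvd
  obtain ⟨a, _, rfl⟩ := Multiset.mem_map.mp hg_mem
  obtain ⟨u, hu⟩ := hpg
  rcases (irreducible_X_sub_C a).isUnit_or_isUnit hu with h | h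
  · exact hp_irr.not_isUnit h
  · have hassoc : Associated p (X - C a) := ⟨h.unit, by rw [IsUnit.unit_spec, ← hu]⟩
    have hdvd : (X - C a) ∣ X ^ (q + 1) - C c := hassoc.symm.dvd.trans (hpr.trans hA)
    have := dvd_iff_isRoot.mp hdvd
    simp only [IsRoot.def, eval_sub, eval_pow, eval_X, eval_C, sub_eq_zero] at this
    exact hc ⟨a, by rw [← this, pow_succ, FiniteField.pow_card]⟩

/-- The polynomial `f` with the roles of `T` and `X` interchanged. -/
noncomputable def MHE.gswap {F : Type*} [Field F] [Fintype F] (c : F) :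
    Polynomial (Polynomial F) :=
  C (X ^ (Fintype.card F + 1) - C c) * X + C (X ^ Fintype.card F - X)

lemma MHE.gswap_coeff1 {F : Type*} [Field F] [Fintype F] (c : F) :
    (MHE.gswap c).coeff 1 = X ^ (Fintype.card F + 1) - C c := by
  simp only [MHE.gswap, coeff_add, coeff_C_mul, coeff_X_one, mul_one, coeff_C, coeff_C_mul,
    coeff_X_zero, mul_zero, if_neg one_ne_zero, add_zero, zero_add, if_pos rfl, if_true]

lemma MHE.gswap_coeff0 {F : Type*} [Field F] [Fintype F] (c : F) :
    (MHE.gswap c).coeff 0 = X ^ Fintype.card F - X := by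
  simp only [MHE.gswap, coeff_add, coeff_C_mul, coeff_X_one, mul_one, coeff_C, coeff_C_mul,
    coeff_X_zero, mul_zero, if_neg one_ne_zero, add_zero, zero_add, if_pos rfl, if_true]

lemma MHE.gswap_primitive {F : Type*} [Field F] [Fintype F] (c : F) (hc : ¬ IsSquare c) :
    (MHE.gswap c).IsPrimitive := by
  intro r hr
  rw [Polynomial.C_dvd_iff_dvd_coeff] at hr
  exact MHE.key_coprime c hc r (MHE.gswap_coeff1 c ▸ hr 1) (MHE.gswap_coeff0 c ▸ hr 0)

lemma MHE.gswap_irreducible {F : Type*} [Field F] [Fintype F] (c : F) (hc : ¬ IsSquare c) :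
    Irreducible (MHE.gswap c) := by
  letI : DecidableEq F := Classical.decEq F
  rw [(MHE.gswap_primitive c hc).irreducible_iff_irreducible_map_fraction_map (K := RatFunc F)]
  apply irreducible_of_degree_eq_one
  rw [MHE.gswap]
  simp only [Polynomial.map_add, Polynomial.map_mul, map_C, Polynomial.map_X]
  apply degree_linear
  simp only [ne_eq, map_eq_zero_iff _ (IsFractionRing.injective F[X] (RatFunc F))]
  exact X_pow_sub_C_ne_zero (Nat.succ_pos _) c

set_option maxHeartbeats 1000000 in
/-- For $q$ odd and $c ∈ F_q$ a nonsquare, the polynomial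
$f = T·X^{q+1} + X^q - X - c·T$ is irreducible over $F_q(T)$ and splits completely
over $F_q((T))$; its roots are totally $T$-adic of degree $q+1$ and height
$1/(q+1)$. -/
theorem min_height_example_odd {F : Type*} [Field F] [Fintype F]
    (hodd : Odd (Fintype.card F))
    (c : F) (hc : ¬ IsSquare c)
    (f : Polynomial (Polynomial F))
    (hf : f = Polynomial.C Polynomial.X * Polynomial.X ^ (Fintype.card F + 1)
        + Polynomial.X ^ Fintype.card F - Polynomial.X
        - Polynomial.C (Polynomial.C c * Polynomial.X)) :
    Irreducible (toRat f) ∧ SplitsCompletely f ∧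
      f.natDegree = Fintype.card F + 1 ∧ degT f = 1 := by
  classical
  letI : DecidableEq F := Classical.decEq F
  set q := Fintype.card F with hqdef
  have hq : 1 < q := Fintype.one_lt_card
  -- basic coefficient computations
  have hcoeff_q : f.coeff q = 1 := by
    rw [hf]
    simp only [coeff_sub, coeff_add, coeff_C_mul, coeff_X_pow, coeff_X, coeff_C, if_true]
    rw [if_neg (show ¬(q = q + 1) by omega), if_neg (show ¬(1 = q) by omega),
      if_neg (show ¬(q = 0) by omega)]
    simp
  have hcoeff_top : f.coeff (q + 1) = X := by
    rw [hf]
    simp only [coeff_sub, coeff_add, coeff_C_mul, coeff_X_pow, coeff_X, coeff_C, if_true]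
    rw [if_neg (show ¬(q + 1 = q) by omega), if_neg (show ¬(1 = q + 1) by omega),
      if_neg (show ¬(q + 1 = 0) by omega)]
    simp
  have hdeg : f.natDegree = q + 1 := by
    rw [hf]
    compute_degree!
    rw [if_neg (show ¬(q = 0) by omega)]
    simp
  -- primitivity of f
  have hprim : f.IsPrimitive := by
    intro r hr
    have := (Polynomial.C_dvd_iff_dvd_coeff r f).mp hr q
    rw [hcoeff_q] at this
    exact isUnit_of_dvd_one this
  -- irreducibility
  have hswap : MHE.swapHom F f = MHE.gswap c := by
    rw [hf, MHE.gswap]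
    simp only [map_add, map_sub, map_mul, map_pow, MHE.swapHom_CX, MHE.swapHom_X, MHE.swapHom_C,
      eval₂_mul, eval₂_C, eval₂_X, eval₂_pow, eval₂_sub, RingHom.coe_comp, Function.comp_apply]
    ring
  have hf_irr : Irreducible f := by
    have : Irreducible (MHE.swapEquiv F f) := by
      show Irreducible (MHE.swapHom F f)
      rw [hswap]
      exact MHE.gswap_irreducible c hc
    exact (MulEquiv.irreducible_iff (MHE.swapEquiv F)).mp this
  have hirr : Irreducible (toRat f) := by
    show Irreducible (f.map (algebraMap (Polynomial F) (RatFunc F)))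
    exact (hprim.irreducible_iff_irreducible_map_fraction_map (K := RatFunc F)).mp hf_irr
  -- splitting over Laurent series
  -- power series setup
  have hq_cast : ((q : ℕ) : PowerSeries F) = 0 := by
    have : ((q : ℕ) : F) = 0 := FiniteField.cast_card_eq_zero F
    rw [← map_natCast (PowerSeries.C) q, this, map_zero]
  set I : Ideal (PowerSeries F) := Ideal.span {PowerSeries.X} with hI
  set fP : Polynomial (PowerSeries F) := f.map (algebraMap (Polynomial F) (PowerSeries F))
    with hfP
  have hfP_eq : fP = C PowerSeries.X * X ^ (q + 1) + X ^ q - X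
      - C (PowerSeries.C c * PowerSeries.X) := by
    have hX : algebraMap (Polynomial F) (PowerSeries F) Polynomial.X = PowerSeries.X := by
      rw [PowerSeries.algebraMap_apply']; simp
    have hCX : algebraMap (Polynomial F) (PowerSeries F) (Polynomial.C c * Polynomial.X)
        = PowerSeries.C c * PowerSeries.X := by
      rw [PowerSeries.algebraMap_apply']; simp
    rw [hfP, hf]
    simp only [Polynomial.map_add, Polynomial.map_sub, Polynomial.map_mul, Polynomial.map_pow,
      Polynomial.map_X, Polynomial.map_C, hX, hCX]
  -- the q roots in F[[T]]
  have hroots : ∀ a : F, ∃ x : PowerSeries F, fP.IsRoot x ∧ x - PowerSeries.C a ∈ I := by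
    intro a
    apply MHE.hensel
    · rw [hfP_eq]
      have : (C PowerSeries.X * X ^ (q + 1) + X ^ q - X
          - C (PowerSeries.C c * PowerSeries.X) : Polynomial (PowerSeries F)).eval
            (PowerSeries.C a)
          = PowerSeries.X * PowerSeries.C (a ^ (q + 1) - c) := by
        simp only [eval_sub, eval_add, eval_mul, eval_pow, eval_C, eval_X]
        rw [← map_pow, ← map_pow, pow_succ, FiniteField.pow_card]
        rw [map_sub, map_mul]
        ring
      rw [this, hI]
      exact Ideal.mem_span_singleton.mpr (dvd_mul_right _ _)
    · apply IsUnit.map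
      rw [hfP_eq, PowerSeries.isUnit_iff_constantCoeff]
      simp only [derivative_sub, derivative_add, derivative_C_mul, derivative_X_pow,
        derivative_X, derivative_C, sub_zero]
      simp only [eval_sub, eval_add, eval_mul, eval_pow, eval_C, eval_X, eval_one, eval_natCast]
      push_cast [hq_cast]
      simp [map_sub, map_mul, map_pow]
  choose xx hxx_root hxx_mod using hroots
  -- the root of the reversed polynomial
  set r : Polynomial (PowerSeries F) := C PowerSeries.X + X - X ^ q
      - C (PowerSeries.C c * PowerSeries.X) * X ^ (q + 1) with hrdef
  obtain ⟨y, hy_root, hy_mod⟩ : ∃ y : PowerSeries F, r.IsRoot y ∧ y - 0 ∈ I := by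
    apply MHE.hensel
    · rw [hrdef]
      simp only [eval_sub, eval_add, eval_mul, eval_pow, eval_C, eval_X]
      rw [zero_pow (show q ≠ 0 by omega), zero_pow (show q + 1 ≠ 0 by omega)]
      simpa [hI] using Ideal.mem_span_singleton.mpr (dvd_rfl (a := (PowerSeries.X : PowerSeries F)))
    · apply IsUnit.map
      rw [hrdef]
      simp only [derivative_sub, derivative_add, derivative_C_mul, derivative_X_pow,
        derivative_X, derivative_C, zero_add]
      simp only [eval_sub, eval_add, eval_mul, eval_pow, eval_C, eval_X, eval_one, eval_natCast]
      rw [zero_pow (show q - 1 ≠ 0 by omega), zero_pow (show q + 1 - 1 ≠ 0 by omega)]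
      simp
  rw [sub_zero] at hy_mod
  have hy_cc : PowerSeries.constantCoeff y = 0 := by
    rw [hI, Ideal.mem_span_singleton] at hy_mod
    exact PowerSeries.X_dvd_iff.mp hy_mod
  have hy0 : y ≠ 0 := by
    rintro rfl
    have := hy_root
    rw [IsRoot.def, hrdef] at this
    simp only [eval_sub, eval_add, eval_mul, eval_pow, eval_C, eval_X] at this
    rw [zero_pow (show q ≠ 0 by omega), zero_pow (show q + 1 ≠ 0 by omega)] at this
    simp [PowerSeries.X_ne_zero] at this
  -- pass to Laurent series
  set φ : PowerSeries F →+* LaurentSeries F :=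
    (algebraMap (PowerSeries F) (LaurentSeries F) : PowerSeries F →+* LaurentSeries F) with hφ
  have hinj : Function.Injective φ := by
    rw [show ⇑φ = ⇑(HahnSeries.ofPowerSeries ℤ F) from LaurentSeries.coe_algebraMap]
    exact HahnSeries.ofPowerSeries_injective
  have hcomp : f.map (algebraMap (Polynomial F) (LaurentSeries F)) = fP.map φ := by
    rw [hfP, Polynomial.map_map]
    rfl
  set fL : Polynomial (LaurentSeries F) := f.map (algebraMap (Polynomial F) (LaurentSeries F))
    with hfL
  -- degree of fL
  have hfL_coeff : fL.coeff (q + 1) = φ PowerSeries.X := by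
    rw [hfL, coeff_map, hcoeff_top]
    have : algebraMap (Polynomial F) (LaurentSeries F) Polynomial.X
        = φ (algebraMap (Polynomial F) (PowerSeries F) Polynomial.X) := rfl
    rw [this, PowerSeries.algebraMap_apply']
    simp
  have hφX : φ (PowerSeries.X : PowerSeries F) ≠ 0 := fun h =>
    PowerSeries.X_ne_zero (hinj (h.trans (map_zero φ).symm))
  have hfL0 : fL ≠ 0 := by
    intro h
    rw [h, coeff_zero] at hfL_coeff
    exact hφX hfL_coeff.symm
  have hfL_deg : fL.natDegree = q + 1 := by
    rw [hfL]
    rw [natDegree_map_of_leadingCoeff_ne_zero]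
    · exact hdeg
    · rw [leadingCoeff, hdeg, hcoeff_top]
      have : algebraMap (Polynomial F) (LaurentSeries F) Polynomial.X
          = φ (algebraMap (Polynomial F) (PowerSeries F) Polynomial.X) := rfl
      rw [this, PowerSeries.algebraMap_apply']
      simpa using hφX
  -- roots of fL coming from power series roots
  have hroot_map : ∀ v : PowerSeries F, fP.IsRoot v → fL.IsRoot (φ v) := by
    intro v hv
    rw [IsRoot.def, hcomp, eval_map, Polynomial.eval₂_hom, hv, map_zero]
  -- the extra root
  set w : LaurentSeries F := φ y with hw
  have hw0 : w ≠ 0 := fun h => hy0 (hinj (h.trans (map_zero φ).symm))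
  have hu_root : fL.IsRoot w⁻¹ := by
    have hrel : φ PowerSeries.X + w - w ^ q
        - (φ (PowerSeries.C c) * φ PowerSeries.X) * w ^ (q + 1) = 0 := by
      have hev := hy_root
      rw [IsRoot.def, hrdef] at hev
      simp only [eval_sub, eval_add, eval_mul, eval_pow, eval_C, eval_X] at hev
      calc φ PowerSeries.X + w - w ^ q
          - (φ (PowerSeries.C c) * φ PowerSeries.X) * w ^ (q + 1)
          = φ (PowerSeries.X + y - y ^ q
              - PowerSeries.C c * PowerSeries.X * y ^ (q + 1)) := by
            simp [hw, map_sub, map_add, map_mul, map_pow]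
      _ = 0 := by rw [hev, map_zero]
    rw [IsRoot.def, hcomp, hfP_eq]
    simp only [Polynomial.map_sub, Polynomial.map_add, Polynomial.map_mul, Polynomial.map_pow,
      Polynomial.map_X, Polynomial.map_C, eval_sub, eval_add, eval_mul, eval_pow, eval_C,
      eval_X, map_mul]
    have hexp : (φ PowerSeries.X * (w⁻¹) ^ (q + 1) + (w⁻¹) ^ q - w⁻¹
        - φ (PowerSeries.C c) * φ PowerSeries.X) * w ^ (q + 1)
        = φ PowerSeries.X + w - w ^ q
          - (φ (PowerSeries.C c) * φ PowerSeries.X) * w ^ (q + 1) := by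
      have h1 : w⁻¹ ^ q * w ^ q = 1 := by rw [← mul_pow, inv_mul_cancel₀ hw0, one_pow]
      have h2 : w⁻¹ * w = 1 := inv_mul_cancel₀ hw0
      simp only [pow_succ]
      linear_combination (φ PowerSeries.X * (w⁻¹ * w)) * h1 + φ PowerSeries.X * h2 + w * h1
        - w ^ q * h2
    have := hexp.trans hrel
    rcases mul_eq_zero.mp this with h | h
    · exact h
    · exact absurd h (pow_ne_zero _ hw0)
  -- constant coefficients of the power series roots
  have hxx_cc : ∀ a : F, PowerSeries.constantCoeff (xx a) = a := by
    intro a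
    have := hxx_mod a
    rw [hI, Ideal.mem_span_singleton] at this
    have h0 := PowerSeries.X_dvd_iff.mp this
    rw [map_sub, PowerSeries.constantCoeff_C, sub_eq_zero] at h0
    exact h0
  -- the finite set of roots
  set s : Finset (LaurentSeries F) :=
    (Finset.univ.image fun a : F => φ (xx a)) ∪ {w⁻¹} with hs
  have hinj2 : Function.Injective fun a : F => φ (xx a) := by
    intro a b hab
    have := congrArg (PowerSeries.constantCoeff) (hinj hab)
    rwa [hxx_cc, hxx_cc] at this
  have hw_not_mem : w⁻¹ ∉ Finset.univ.image fun a : F => φ (xx a) := by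
    intro hmem
    obtain ⟨a, _, ha⟩ := Finset.mem_image.mp hmem
    have h1 : φ (xx a * y) = 1 := by
      rw [map_mul, ← hw, ha, inv_mul_cancel₀ hw0]
    have h2 : xx a * y = 1 := hinj (by rw [h1, map_one])
    have := congrArg (PowerSeries.constantCoeff) h2
    rw [map_mul, hy_cc, mul_zero, map_one] at this
    exact zero_ne_one this
  have hs_card : s.card = q + 1 := by
    rw [hs, Finset.card_union_of_disjoint (Finset.disjoint_singleton_right.mpr hw_not_mem),
      Finset.card_image_of_injective _ hinj2, Finset.card_singleton, Finset.card_univ]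
  have hs_sub : s.val ≤ fL.roots := by
    rw [Multiset.le_iff_subset s.nodup]
    intro z hz
    rw [Finset.mem_val, hs, Finset.mem_union] at hz
    rw [mem_roots hfL0]
    rcases hz with hz | hz
    · obtain ⟨a, _, rfl⟩ := Finset.mem_image.mp hz
      exact hroot_map _ (hxx_root a)
    · rw [Finset.mem_singleton] at hz
      rw [hz]
      exact hu_root
  have hcard_eq : fL.roots.card = fL.natDegree := by
    apply le_antisymm (card_roots' fL)
    calc fL.natDegree = q + 1 := hfL_deg
    _ = s.val.card := hs_card.symm
    _ ≤ fL.roots.card := Multiset.card_le_card hs_sub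
  have hsplits : SplitsCompletely f := by
    rw [SplitsCompletely]
    exact (splits_iff_card_roots).mpr hcard_eq
  -- degT computation
  have hdegT : degT f = 1 := by
    unfold degT
    apply le_antisymm
    · apply Finset.sup_le
      intro i _
      rw [hf]
      simp only [coeff_sub, coeff_add, coeff_C_mul, coeff_X_pow, coeff_X, coeff_C]
      split_ifs <;> compute_degree
    · have hmem : q + 1 ∈ f.support := by
        rw [mem_support_iff, hcoeff_top]
        exact X_ne_zero
      have h1 : (f.coeff (q + 1)).natDegree = 1 := by rw [hcoeff_top, natDegree_X]
      exact h1 ▸ Finset.le_sup (f := fun i => (f.coeff i).natDegree) hmem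
  exact ⟨hirr, hsplits, hdeg, hdegT⟩
end

section
/- Let q = 2^s with s ≥ 1 and let c ∈ F_q be an element not of the form a² + a for any a ∈ F_q (i.e. not in the image of the Artin–Schreier map). Then the polynomial f(X) = T·X^{q+1} + X^q + (T+1)·X + c·T ∈ F_q[T][X] is irreducible as a polynomial in X over F_q(T) and splits completely over F_q((T)). In particular, each of its roots is a totally T-adic function of degree q+1 and height 1/(q+1) over F_q(T). -/
set_option synthInstance.maxHeartbeats 400000
set_option maxHeartbeats 1000000


open Polynomial

namespace MinHeightAux

/-! ### Generalities -/

lemma neg_eq_self {R : Type*} [Ring R] (h2 : (1 + 1 : R) = 0) (x : R) : -x = x :=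
  neg_eq_of_add_eq_zero_left (by
    calc x + x = (1 + 1) * x := by rw [add_mul, one_mul]
    _ = 0 := by rw [h2, zero_mul])

/-! ### Adic completeness of power series and Hensel's lemma -/

theorem ps_isAdicComplete (F : Type*) [Field F] :
    IsAdicComplete (Ideal.span {(PowerSeries.X : PowerSeries F)}) (PowerSeries F) := by
  set I : Ideal (PowerSeries F) := Ideal.span {(PowerSeries.X : PowerSeries F)} with hI
  have hmem : ∀ (n : ℕ) (x : PowerSeries F),
      x ∈ (I ^ n • ⊤ : Ideal (PowerSeries F)) ↔ ∀ m < n, PowerSeries.coeff m x = 0 := by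
    intro n x
    rw [Ideal.smul_eq_mul, Ideal.mul_top, hI, Ideal.span_singleton_pow, Ideal.mem_span_singleton,
      PowerSeries.X_pow_dvd_iff]
  refine { toIsHausdorff := ⟨?_⟩, toIsPrecomplete := ⟨?_⟩ }
  · intro x hx
    ext m
    have := hx (m + 1)
    rw [SModEq.zero, hmem] at this
    simpa using this m (Nat.lt_succ_self m)
  · intro f hf
    refine ⟨PowerSeries.mk fun n => PowerSeries.coeff n (f (n + 1)), fun n => ?_⟩
    rw [SModEq.sub_mem, hmem]
    intro m hm
    have h1 := hf (show m + 1 ≤ n from hm)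
    rw [SModEq.sub_mem, hmem] at h1
    have h2 := h1 m (Nat.lt_succ_self m)
    simp only [map_sub] at h2 ⊢
    rw [PowerSeries.coeff_mk]
    rw [sub_eq_zero] at h2 ⊢
    exact h2.symm

/-- Hensel's lemma for adically complete rings, without the monicity assumption
(the proof is that of Mathlib's `IsAdicComplete.henselianRing`, which never uses
monicity). -/
theorem hensel_adic {R : Type*} [CommRing R] (I : Ideal R) [IsAdicComplete I R]
    (f : R[X]) (a₀ : R) (h₁ : f.eval a₀ ∈ I)
    (h₂ : IsUnit (Ideal.Quotient.mk I (f.derivative.eval a₀))) :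
    ∃ a : R, f.IsRoot a ∧ a - a₀ ∈ I := by
  classical
  let f' := derivative f
  let c : ℕ → R := fun n => Nat.recOn n a₀ fun _ b => b - f.eval b * Ring.inverse (f'.eval b)
  have hc : ∀ n, c (n + 1) = c n - f.eval (c n) * Ring.inverse (f'.eval (c n)) := by
    intro n
    simp only [c, Nat.rec_add_one]
  have hc_mod : ∀ n, c n ≡ a₀ [SMOD I] := by
    intro n
    induction' n with n ih
    · rfl
    rw [hc, sub_eq_add_neg, ← add_zero a₀]
    refine ih.add ?_
    rw [SModEq.zero, Ideal.neg_mem_iff]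
    refine I.mul_mem_right _ ?_
    rw [← SModEq.zero] at h₁ ⊢
    exact (ih.eval f).trans h₁
  have hf'c : ∀ n, IsUnit (f'.eval (c n)) := by
    intro n
    haveI := isLocalHom_of_le_jacobson_bot I (IsAdicComplete.le_jacobson_bot I)
    apply IsUnit.of_map (Ideal.Quotient.mk I)
    convert h₂ using 1
    exact SModEq.def.mp ((hc_mod n).eval _)
  have hfcI : ∀ n, f.eval (c n) ∈ I ^ (n + 1) := by
    intro n
    induction' n with n ih
    · rw [zero_add, pow_one]; exact h₁
    rw [← taylor_eval_sub (c n), hc, sub_eq_add_neg, sub_eq_add_neg,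
      add_neg_cancel_comm]
    rw [eval_eq_sum, sum_over_range' _ _ _ (lt_add_of_pos_right _ zero_lt_two), ←
      Finset.sum_range_add_sum_Ico _ (Nat.le_add_left _ _)]
    swap
    · intro i
      rw [zero_mul]
    refine Ideal.add_mem _ ?_ ?_
    · erw [Finset.sum_range_succ]
      rw [Finset.range_one, Finset.sum_singleton,
        taylor_coeff_zero, taylor_coeff_one, pow_zero, pow_one, mul_one, mul_neg,
        mul_left_comm, Ring.mul_inverse_cancel _ (hf'c n), mul_one, add_neg_cancel]
      exact Ideal.zero_mem _
    · refine Submodule.sum_mem _ ?_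
      simp only [Finset.mem_Ico]
      rintro i ⟨h2i, _⟩
      have aux : n + 2 ≤ i * (n + 1) := by trans 2 * (n + 1) <;> nlinarith only [h2i]
      refine Ideal.mul_mem_left _ _ (Ideal.pow_le_pow_right aux ?_)
      rw [pow_mul']
      exact Ideal.pow_mem_pow ((Ideal.neg_mem_iff _).2 <| Ideal.mul_mem_right _ _ ih) _
  have aux : ∀ m n, m ≤ n → c m ≡ c n [SMOD (I ^ m • ⊤ : Ideal R)] := by
    intro m n hmn
    rw [← Ideal.one_eq_top, Ideal.smul_eq_mul, mul_one]
    obtain ⟨k, rfl⟩ := Nat.exists_eq_add_of_le hmn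
    clear hmn
    induction' k with k ih
    · rw [add_zero]
    rw [← add_assoc, hc, ← add_zero (c m), sub_eq_add_neg]
    refine ih.add ?_
    symm
    rw [SModEq.zero, Ideal.neg_mem_iff]
    refine Ideal.mul_mem_right _ _ (Ideal.pow_le_pow_right ?_ (hfcI _))
    rw [add_assoc]
    exact le_self_add
  obtain ⟨a, ha⟩ := IsPrecomplete.prec' c (aux _ _)
  refine ⟨a, ?_, ?_⟩
  · show f.IsRoot a
    suffices ∀ n, f.eval a ≡ 0 [SMOD (I ^ n • ⊤ : Ideal R)] by exact IsHausdorff.haus' _ this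
    intro n
    specialize ha n
    rw [← Ideal.one_eq_top, Ideal.smul_eq_mul, mul_one] at ha ⊢
    refine (ha.symm.eval f).trans ?_
    rw [SModEq.zero]
    exact Ideal.pow_le_pow_right le_self_add (hfcI _)
  · show a - a₀ ∈ I
    specialize ha (0 + 1)
    rw [hc, pow_one, ← Ideal.one_eq_top, Ideal.smul_eq_mul, mul_one, sub_eq_add_neg] at ha
    rw [← SModEq.sub_mem, ← add_zero a₀]
    refine ha.symm.trans (SModEq.rfl.add ?_)
    rw [SModEq.zero, Ideal.neg_mem_iff]
    exact Ideal.mul_mem_right _ _ h₁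

/-! ### The variable-swapping automorphism of `F[T][X]` -/

/-- The hom `F[T][X] → F[T][X]` swapping the two variables. -/
noncomputable def swapH (F : Type*) [Field F] :
    Polynomial (Polynomial F) →+* Polynomial (Polynomial F) :=
  eval₂RingHom (eval₂RingHom ((C : Polynomial F →+* Polynomial (Polynomial F)).comp
    (C : F →+* Polynomial F)) (X : Polynomial (Polynomial F))) (C X)

variable {F : Type*} [Field F]

@[simp] lemma swapH_C_C (a : F) : swapH F (C (C a)) = C (C a) := by
  simp [swapH]

@[simp] lemma swapH_X : swapH F (X : Polynomial (Polynomial F)) = C X := by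
  simp [swapH]

@[simp] lemma swapH_C_X : swapH F (C (X : Polynomial F)) = X := by
  simp [swapH]

lemma swapH_comp_C : (swapH F).comp (C : Polynomial F →+* Polynomial (Polynomial F))
    = eval₂RingHom ((C : Polynomial F →+* Polynomial (Polynomial F)).comp
        (C : F →+* Polynomial F)) (X : Polynomial (Polynomial F)) := by
  apply Polynomial.ringHom_ext <;> simp [swapH]

@[simp] lemma swapH_C (p : Polynomial F) :
    swapH F (C p) = eval₂ ((C : Polynomial F →+* Polynomial (Polynomial F)).comp
        (C : F →+* Polynomial F)) (X : Polynomial (Polynomial F)) p := by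
  simpa using RingHom.congr_fun (swapH_comp_C (F := F)) p

lemma swapH_swapH_C : ((swapH F).comp (swapH F)).comp
    (C : Polynomial F →+* Polynomial (Polynomial F)) = C := by
  apply Polynomial.ringHom_ext <;> simp

lemma swapH_involutive : (swapH F).comp (swapH F) = RingHom.id _ := by
  apply Polynomial.ringHom_ext
  · intro p
    simpa using RingHom.congr_fun (swapH_swapH_C (F := F)) p
  · simp

/-- The swap as a ring equivalence. -/
noncomputable def swapE (F : Type*) [Field F] :
    Polynomial (Polynomial F) ≃+* Polynomial (Polynomial F) :=
  RingEquiv.ofRingHom (swapH F) (swapH F) swapH_involutive swapH_involutive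

/-! ### Coprimality over finite fields of characteristic two -/

variable [Fintype F]

lemma X_pow_card_add_X (h2 : (1 + 1 : F) = 0) :
    (X ^ Fintype.card F + X : F[X]) =
      (Multiset.map (fun a => X - C a) (Finset.univ.val : Multiset F)).prod := by
  have h2P : (1 + 1 : F[X]) = 0 := by
    rw [← C_1, ← C_add, h2, C_0]
  have hcard : 1 < Fintype.card F := Fintype.one_lt_card
  have hmonic : (X ^ Fintype.card F - X : F[X]).Monic := by
    refine (monic_X_pow _).sub_of_left ?_
    rw [degree_X_pow, degree_X]
    exact_mod_cast hcard
  have hsplit : Splits (X ^ Fintype.card F - X : F[X]) := by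
    rw [Polynomial.splits_iff_card_roots, FiniteField.roots_X_pow_card_sub_X,
      FiniteField.X_pow_card_sub_X_natDegree_eq F hcard]
    simp
  have h := hsplit.eq_prod_roots_of_monic hmonic
  rw [FiniteField.roots_X_pow_card_sub_X] at h
  rw [← h, sub_eq_add_neg, neg_eq_self h2P X]

lemma coprime_AB (h2 : (1 + 1 : F) = 0) (c : F) (hc : ∀ a : F, a ^ 2 + a ≠ c) :
    IsCoprime (X ^ (Fintype.card F + 1) + X + C c : F[X])
      (X ^ Fintype.card F + X : F[X]) := by
  rw [X_pow_card_add_X h2, ← Finset.prod_eq_multiset_prod]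
  apply IsCoprime.prod_right
  intro a _
  refine ((Polynomial.irreducible_X_sub_C a).coprime_iff_not_dvd.mpr ?_).symm
  rw [Polynomial.dvd_iff_isRoot]
  intro hroot
  simp only [IsRoot.def, eval_add, eval_pow, eval_X, eval_C] at hroot
  apply hc a
  have ha : a ^ (Fintype.card F + 1) = a ^ 2 := by
    rw [pow_succ, FiniteField.pow_card, sq]
  rw [ha] at hroot
  have := neg_eq_self h2 c
  linear_combination hroot + this

end MinHeightAux
namespace MinHeightAux

lemma irr_aux {F : Type*} [Field F] [Fintype F] (h2 : (1 + 1 : F) = 0)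
    (c : F) (hc : ∀ a : F, a ^ 2 + a ≠ c)
    (f : Polynomial (Polynomial F))
    (hf : f = Polynomial.C Polynomial.X * Polynomial.X ^ (Fintype.card F + 1)
        + Polynomial.X ^ Fintype.card F
        + Polynomial.C (Polynomial.X + 1) * Polynomial.X
        + Polynomial.C (Polynomial.C c * Polynomial.X)) :
    Irreducible (toRat f) := by
  classical
  set q := Fintype.card F with hqdef
  have hq2 : 2 ≤ q := Fintype.one_lt_card
  set AA : F[X] := X ^ (q + 1) + X + C c with hAA
  set BB : F[X] := X ^ q + X with hBB
  set g : Polynomial (Polynomial F) := C AA * X + C BB with hg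
  have hAAne : AA ≠ 0 := by
    intro h
    have : AA.coeff (q + 1) = 1 := by
      have h1 : q + 1 ≠ 1 := by omega
      have h0 : ¬ (q = 0) := by omega
      simp [hAA, coeff_X_pow, coeff_X, coeff_C, h1, h0]
    rw [h] at this
    simp at this
  have hg1 : g.coeff 1 = AA := by simp [hg, coeff_C]
  have hg0 : g.coeff 0 = BB := by simp [hg, coeff_C]
  have gprim : g.IsPrimitive := by
    intro r hr
    have h1 := (Polynomial.C_dvd_iff_dvd_coeff r g).mp hr 1
    have h0 := (Polynomial.C_dvd_iff_dvd_coeff r g).mp hr 0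
    rw [hg1] at h1; rw [hg0] at h0
    exact (coprime_AB h2 c hc).isUnit_of_dvd' h1 h0
  have girr : Irreducible g := by
    rw [gprim.irreducible_iff_irreducible_map_fraction_map
      (K := FractionRing (Polynomial F))]
    apply irreducible_of_degree_eq_one
    have hmap : g.map (algebraMap (Polynomial F) (FractionRing (Polynomial F)))
        = C (algebraMap (Polynomial F) _ AA) * X + C (algebraMap (Polynomial F) _ BB) := by
      simp [hg]
    rw [hmap]
    apply degree_linear
    intro h
    exact hAAne (IsFractionRing.injective (Polynomial F) (FractionRing (Polynomial F))
      (by rw [h, map_zero]))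
  have hswap : swapH F g = f := by
    rw [hf, hg, hAA, hBB]
    simp only [map_add, map_mul, map_pow, swapH_C_C, swapH_C_X,
      swapH_X, swapH_C, eval₂_add, eval₂_pow, eval₂_X, eval₂_C,
      eval₂_mul, RingHom.coe_comp, Function.comp_apply]
    simp only [map_one]
    ring
  have firr : Irreducible f := by
    rw [← hswap]
    have heq : swapH F g = swapE F g := rfl
    rw [heq]
    exact (MulEquiv.irreducible_iff (swapE F)).mpr girr
  have fprim : f.IsPrimitive := by
    have hcq : f.coeff q = 1 := by
      have h1 : ¬ (1 = q) := by omega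
      have h2' : ¬ (q + 1 = q) := by omega
      have h3 : ¬ (q = 0) := by omega
      rw [hf]
      simp [coeff_add, coeff_C_mul, coeff_X_pow, coeff_X, coeff_C, h1, h2', h3, add_mul, one_mul]
    intro r hr
    have h1 := (Polynomial.C_dvd_iff_dvd_coeff r f).mp hr q
    rw [hcq] at h1
    exact isUnit_of_dvd_one h1
  exact (fprim.irreducible_iff_irreducible_map_fraction_map (K := RatFunc F)).mp firr

end MinHeightAux

namespace MinHeightAux

variable {F : Type*} [Field F]

lemma mem_spanX_iff (x : PowerSeries F) :
    x ∈ Ideal.span {(PowerSeries.X : PowerSeries F)} ↔ PowerSeries.constantCoeff x = 0 := by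
  rw [Ideal.mem_span_singleton, PowerSeries.X_dvd_iff]

theorem hensel_ps (g : Polynomial (PowerSeries F)) (a₀ : PowerSeries F)
    (h1 : PowerSeries.constantCoeff (g.eval a₀) = 0)
    (h2 : PowerSeries.constantCoeff (g.derivative.eval a₀) ≠ 0) :
    ∃ a : PowerSeries F, g.IsRoot a ∧ PowerSeries.constantCoeff (a - a₀) = 0 := by
  haveI := ps_isAdicComplete F
  have hu : IsUnit (g.derivative.eval a₀) := by
    rw [PowerSeries.isUnit_iff_constantCoeff]
    exact isUnit_iff_ne_zero.mpr h2
  obtain ⟨a, ha1, ha2⟩ := hensel_adic (Ideal.span {(PowerSeries.X : PowerSeries F)}) g a₀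
    ((mem_spanX_iff _).mpr h1)
    (hu.map (Ideal.Quotient.mk _))
  exact ⟨a, ha1, (mem_spanX_iff _).mp ha2⟩

lemma algebraMap_poly_ps_X :
    algebraMap (Polynomial F) (PowerSeries F) Polynomial.X = PowerSeries.X := by
  show (Polynomial.coeToPowerSeries.algHom F).toRingHom Polynomial.X = _
  simp [Polynomial.coeToPowerSeries.algHom_apply]

lemma algebraMap_poly_ps_C (a : F) :
    algebraMap (Polynomial F) (PowerSeries F) (Polynomial.C a) = PowerSeries.C a := by
  show (Polynomial.coeToPowerSeries.algHom F).toRingHom _ = _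
  simp [Polynomial.coeToPowerSeries.algHom_apply]

variable [Fintype F]

set_option maxHeartbeats 1000000 in
lemma splits_aux (h2 : (1 + 1 : F) = 0)
    (c : F) (hc : ∀ a : F, a ^ 2 + a ≠ c)
    (f : Polynomial (Polynomial F))
    (hf : f = Polynomial.C Polynomial.X * Polynomial.X ^ (Fintype.card F + 1)
        + Polynomial.X ^ Fintype.card F
        + Polynomial.C (Polynomial.X + 1) * Polynomial.X
        + Polynomial.C (Polynomial.C c * Polynomial.X)) :
    SplitsCompletely f ∧
      (f.map (algebraMap (Polynomial F) (LaurentSeries F))).natDegree = Fintype.card F + 1 := by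
  classical
  set q := Fintype.card F with hqdef
  have hq2 : 2 ≤ q := Fintype.one_lt_card
  obtain ⟨j, hj⟩ : ∃ j, q = j + 2 := ⟨q - 2, by omega⟩
  have h2F : (2 : F) = 0 := by rw [← h2]; norm_num
  have hqF : ((q : ℕ) : F) = 0 := FiniteField.cast_card_eq_zero F
  set gR : Polynomial (PowerSeries F) :=
    Polynomial.C PowerSeries.X * Polynomial.X ^ (q + 1) + Polynomial.X ^ q
      + Polynomial.C (PowerSeries.X + 1) * Polynomial.X
      + Polynomial.C (PowerSeries.C c * PowerSeries.X) with hgRdef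
  have hgR : f.map (algebraMap (Polynomial F) (PowerSeries F)) = gR := by
    rw [hf, hgRdef]
    simp only [Polynomial.map_add, Polynomial.map_mul, Polynomial.map_pow, Polynomial.map_C,
      Polynomial.map_X, Polynomial.map_one, map_add, map_mul, map_one,
      algebraMap_poly_ps_X, algebraMap_poly_ps_C]
  -- the `q` integral roots
  have H : ∀ a : F, ∃ x : PowerSeries F,
      gR.IsRoot x ∧ PowerSeries.constantCoeff (x - PowerSeries.C a) = 0 := by
    intro a
    apply hensel_ps
    · have haa : a ^ (q + 1) = a * a := by rw [pow_succ, FiniteField.pow_card]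
      have hCa : PowerSeries.C a + PowerSeries.C a = 0 := by
        rw [← map_add]
        have : a + a = 0 := by linear_combination h2 * a
        rw [this, map_zero]
      have heval : gR.eval (PowerSeries.C a)
          = PowerSeries.X * PowerSeries.C (a * a + a + c) := by
        rw [hgRdef]
        have haq : a ^ q = a := FiniteField.pow_card a
        simp only [eval_add, eval_mul, eval_pow, eval_C, eval_X, ← map_pow, haa, haq]
        rw [show PowerSeries.C (a * a + a + c) = PowerSeries.C (a * a)
          + PowerSeries.C a + PowerSeries.C c by rw [← map_add, ← map_add]]
        linear_combination hCa
      rw [heval]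
      simp
    · have hder : gR.derivative = Polynomial.C PowerSeries.X
          * (Polynomial.C (((q : ℕ) + 1 : ℕ) : PowerSeries F) * Polynomial.X ^ q)
          + Polynomial.C (((q : ℕ) : ℕ) : PowerSeries F) * Polynomial.X ^ (q - 1)
          + Polynomial.C (PowerSeries.X + 1) := by
        rw [hgRdef]
        simp only [derivative_add, derivative_C_mul, derivative_X_pow, derivative_X, derivative_C,
          mul_one, add_zero, Nat.add_sub_cancel]
      rw [hder]
      simp only [eval_add, eval_mul, eval_pow, eval_C, eval_X, map_add, map_mul, map_pow,
        map_natCast, PowerSeries.constantCoeff_X, PowerSeries.constantCoeff_C,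
        PowerSeries.constantCoeff_one]
      simp only [Polynomial.eval_natCast, map_natCast, hqF]
      simp
  choose xa hxaroot hxacc using H
  -- the root at infinity
  set hP : Polynomial (PowerSeries F) :=
    Polynomial.X ^ (j + 3) + Polynomial.X ^ (j + 2)
      + Polynomial.C (PowerSeries.X ^ (j + 2) + PowerSeries.X ^ (j + 1)) * Polynomial.X
      + Polynomial.C (PowerSeries.C c * PowerSeries.X ^ (j + 3)) with hPdef
  have Hinf : ∃ y : PowerSeries F, hP.IsRoot y ∧ PowerSeries.constantCoeff (y - 1) = 0 := by
    apply hensel_ps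
    · rw [hPdef]
      simp only [eval_add, eval_mul, eval_pow, eval_C, eval_X, one_pow, mul_one]
      simp only [map_add, map_mul, map_pow, map_one, PowerSeries.constantCoeff_X,
        PowerSeries.constantCoeff_C]
      rw [h2]
      ring
    · have hder : hP.derivative = Polynomial.C (((j + 3 : ℕ) : PowerSeries F))
          * Polynomial.X ^ (j + 2)
          + Polynomial.C (((j + 2 : ℕ) : PowerSeries F)) * Polynomial.X ^ (j + 1)
          + Polynomial.C (PowerSeries.X ^ (j + 2) + PowerSeries.X ^ (j + 1)) := by
        rw [hPdef]
        simp only [derivative_add, derivative_C_mul, derivative_X_pow, derivative_X, derivative_C,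
          mul_one, add_zero, Nat.add_sub_cancel]
        norm_num
      rw [hder]
      simp only [eval_add, eval_mul, eval_pow, eval_C, eval_X, one_pow, mul_one, map_add, map_mul,
        map_pow, Polynomial.eval_natCast, map_natCast, map_one, PowerSeries.constantCoeff_X]
      intro hcon
      push_cast at hcon
      apply one_ne_zero (α := F)
      linear_combination hcon - ((j : F) + 2) * h2F
  obtain ⟨y₀, hy₀root, hy₀cc⟩ := Hinf
  have hy₀1 : PowerSeries.constantCoeff y₀ = 1 := by
    have h := hy₀cc
    rw [map_sub, map_one, sub_eq_zero] at h
    exact h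
  -- over the Laurent series field
  set ι : PowerSeries F →+* LaurentSeries F :=
    (algebraMap (PowerSeries F) (LaurentSeries F) : _ →+* _) with hι
  have hιinj : Function.Injective ι := HahnSeries.ofPowerSeries_injective
  set t : LaurentSeries F := ι PowerSeries.X with ht
  have ht0 : t ≠ 0 := by
    intro h
    exact PowerSeries.X_ne_zero (hιinj (show ι PowerSeries.X = ι 0 by rw [← ht, h, map_zero]))
  set ψ : Polynomial F →+* LaurentSeries F :=
    (algebraMap (Polynomial F) (LaurentSeries F) : _ →+* _) with hψ
  have hψι : ψ = ι.comp (algebraMap (Polynomial F) (PowerSeries F)) := rfl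
  set fK := f.map ψ with hfKdefEq
  have hfK : fK = gR.map ι := by rw [hfKdefEq, hψι, ← Polynomial.map_map, hgR]
  have hfKexp : fK = Polynomial.C t * Polynomial.X ^ (q + 1) + Polynomial.X ^ q
      + Polynomial.C (t + 1) * Polynomial.X
      + Polynomial.C (ι (PowerSeries.C c) * t) := by
    rw [hfK, hgRdef]
    simp only [Polynomial.map_add, Polynomial.map_mul, Polynomial.map_pow, Polynomial.map_C,
      Polynomial.map_X, Polynomial.map_one, map_add, map_mul, map_one, ht]
  have hxaK : ∀ a : F, fK.eval (ι (xa a)) = 0 := by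
    intro a
    rw [hfK, Polynomial.eval_map, Polynomial.eval₂_at_apply, hxaroot a, map_zero]
  set xinf : LaurentSeries F := ι y₀ * t⁻¹ with hxinf
  have hinfroot : fK.eval xinf = 0 := by
    have hkey : fK.eval xinf * t ^ q = ι (hP.eval y₀) := by
      rw [hfKexp, hPdef, hxinf]
      simp only [eval_add, eval_mul, eval_pow, eval_C, eval_X, map_add, map_mul, map_pow]
      rw [hj]
      rw [← ht]
      simp only [mul_pow, inv_pow]
      field_simp
      ring
    have hz : fK.eval xinf * t ^ q = 0 := by rw [hkey, hy₀root, map_zero]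
    exact (mul_eq_zero.mp hz).resolve_right (pow_ne_zero _ ht0)
  -- distinctness
  have hxacc' : ∀ a : F, PowerSeries.constantCoeff (xa a) = a := by
    intro a
    have h := hxacc a
    rw [map_sub, PowerSeries.constantCoeff_C, sub_eq_zero] at h
    exact h
  have hinj2 : Function.Injective fun a : F => ι (xa a) := by
    intro a b hab
    have := hιinj hab
    have h2' := congrArg (PowerSeries.constantCoeff) this
    rw [hxacc' a, hxacc' b] at h2'
    exact h2'
  have hne : ∀ a : F, xinf ≠ ι (xa a) := by
    intro a heq
    have h1 : ι y₀ = ι (xa a * PowerSeries.X) := by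
      have h0 : ι y₀ * t⁻¹ * t = ι (xa a) * t := by
        rw [← hxinf, heq]
      rw [mul_assoc, inv_mul_cancel₀ ht0, mul_one] at h0
      rw [map_mul, ← ht]
      exact h0
    have h2' := hιinj h1
    have h3 := congrArg (PowerSeries.constantCoeff) h2'
    rw [hy₀1, map_mul, PowerSeries.constantCoeff_X, mul_zero] at h3
    exact one_ne_zero h3
  set S : Finset (LaurentSeries F) :=
    insert xinf (Finset.univ.image fun a : F => ι (xa a)) with hS
  have hScard : S.card = q + 1 := by
    rw [hS, Finset.card_insert_of_notMem, Finset.card_image_of_injective _ hinj2,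
      Finset.card_univ, ← hqdef]
    intro hmem
    obtain ⟨a, _, ha⟩ := Finset.mem_image.mp hmem
    exact hne a ha.symm
  have hdegK : fK.natDegree = q + 1 := by
    rw [hfKexp]
    compute_degree!
    rw [if_neg (show ¬ q = 0 by omega), add_zero]
    intro hcon
    exact ht0 hcon
  have hfKne : fK ≠ 0 := by
    intro h
    rw [h, natDegree_zero] at hdegK
    omega
  have hsub : S ⊆ fK.roots.toFinset := by
    intro x hx
    rw [Multiset.mem_toFinset, Polynomial.mem_roots']
    refine ⟨hfKne, ?_⟩
    rw [hS, Finset.mem_insert] at hx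
    rcases hx with rfl | hx
    · exact hinfroot
    · obtain ⟨a, _, rfl⟩ := Finset.mem_image.mp hx
      exact hxaK a
  have hcount : Multiset.card fK.roots = fK.natDegree := by
    have h1 : q + 1 ≤ Multiset.card fK.roots := by
      calc q + 1 = S.card := hScard.symm
      _ ≤ fK.roots.toFinset.card := Finset.card_le_card hsub
      _ ≤ Multiset.card fK.roots := Multiset.toFinset_card_le _
    have h2' : Multiset.card fK.roots ≤ fK.natDegree := Polynomial.card_roots' fK
    omega
  constructor
  · exact Polynomial.splits_iff_card_roots.mpr hcount
  · exact hdegK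

end MinHeightAux


/-- For $q = 2^s$ and $c ∈ F_q$ not of the form $a^2 + a$, the polynomial
$f = T·X^{q+1} + X^q + (T+1)·X + c·T$ is irreducible over $F_q(T)$ and splits
completely over $F_q((T))$; its roots are totally $T$-adic of degree $q+1$ and
height $1/(q+1)$. -/
theorem min_height_example_even {F : Type*} [Field F] [Fintype F]
    (s : ℕ) (hs : 1 ≤ s) (hq : Fintype.card F = 2 ^ s)
    (c : F) (hc : ∀ a : F, a ^ 2 + a ≠ c)
    (f : Polynomial (Polynomial F))
    (hf : f = Polynomial.C Polynomial.X * Polynomial.X ^ (Fintype.card F + 1)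
        + Polynomial.X ^ Fintype.card F
        + Polynomial.C (Polynomial.X + 1) * Polynomial.X
        + Polynomial.C (Polynomial.C c * Polynomial.X)) :
    Irreducible (toRat f) ∧ SplitsCompletely f ∧
      f.natDegree = Fintype.card F + 1 ∧ degT f = 1 := by
  classical
  have h2 : (1 + 1 : F) = 0 := by
    have hcast := FiniteField.cast_card_eq_zero F
    rw [hq] at hcast
    push_cast at hcast
    have h2' : (2 : F) = 0 := (pow_eq_zero_iff (by omega)).mp hcast
    linear_combination h2'
  set q := Fintype.card F with hqdef
  have hq2 : 2 ≤ q := Fintype.one_lt_card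
  refine ⟨MinHeightAux.irr_aux h2 c hc f hf, (MinHeightAux.splits_aux h2 c hc f hf).1, ?_, ?_⟩
  · rw [hf]
    compute_degree!
    rw [if_neg (show ¬ q = 0 by omega), add_zero]
    exact Polynomial.X_ne_zero
  · -- degT f = 1
    have hctop : f.coeff (q + 1) = Polynomial.X := by
      have e1 : ¬ (1 = q + 1) := by omega
      have e2 : ¬ (q = q + 1) := by omega
      have e3 : ¬ (q + 1 = 0) := by omega
      have e4 : ¬ (q = 0) := by omega
      rw [hf]
      simp [coeff_add, coeff_C_mul, coeff_X_pow, coeff_X, coeff_C, coeff_one, e1, e2, e3, e4]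
    have hXaddone : (Polynomial.X + 1 : Polynomial F).natDegree = 1 := by
      rw [show (1 : Polynomial F) = Polynomial.C 1 from Polynomial.C_1.symm,
        natDegree_X_add_C]
    have hb : ∀ u v : Polynomial F, u.natDegree ≤ 1 → v.natDegree ≤ 1 →
        (u + v).natDegree ≤ 1 := fun u v hu hv =>
      le_trans (natDegree_add_le u v) (max_le hu hv)
    have hbound : ∀ i, (f.coeff i).natDegree ≤ 1 := by
      intro i
      rw [hf]
      simp only [coeff_add]
      refine hb _ _ (hb _ _ (hb _ _ ?_ ?_) ?_) ?_
      · rw [coeff_C_mul, coeff_X_pow]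
        split_ifs <;> simp
      · rw [coeff_X_pow]
        split_ifs <;> simp
      · rw [coeff_C_mul, coeff_X]
        split_ifs <;> simp [hXaddone]
      · rw [coeff_C]
        split_ifs <;>
          simp [le_trans (natDegree_C_mul_le _ _) (le_of_eq natDegree_X)]
    apply le_antisymm
    · exact Finset.sup_le fun i _ => hbound i
    · have hmem : q + 1 ∈ f.support := by
        rw [Polynomial.mem_support_iff, hctop]
        exact Polynomial.X_ne_zero
      calc (1 : ℕ) = (f.coeff (q + 1)).natDegree := by rw [hctop, natDegree_X]
      _ ≤ _ := Finset.le_sup (f := fun i => (f.coeff i).natDegree) hmem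
end

section
/- Let n ≥ 1 be an integer, let q be a prime power with q ≡ 1 (mod n), and let K be an algebraic closure of F_q. Then the polynomial Y^n − (X^n·(X^q − X)^n + 1), viewed as a polynomial in Y over the field K(X) (equivalently, as an element of K[X,Y]), is irreducible. (Geometrically: the affine curve y^n = x^n(x^q − x)^n + 1 over F_q is geometrically irreducible.) -/
open Polynomial

lemma pow_pred_dvd_deriv {K : Type*} [CommRing K] (r : K) (i : ℕ) (w : Polynomial K) :
    (X - C r) ^ (i - 1) ∣ derivative ((X - C r) ^ i * w) := by
  rw [derivative_mul, derivative_pow]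
  refine dvd_add ⟨C (i : K) * derivative (X - C r) * w, by ring⟩ ?_
  exact dvd_mul_of_dvd_left (pow_dvd_pow _ (Nat.sub_le i 1)) _

lemma exists_good_root {K : Type*} [Field K] [IsAlgClosed K] (q : ℕ) (hq : 2 ≤ q)
    (hqK : ((q : ℕ) : K) = 0) {ζ : K} (hζ0 : ζ ≠ 0) (hζ1 : ζ ≠ -1) :
    ∃ α : K, α ^ (q + 1) - α ^ 2 = ζ ∧ α ^ q - 2 * α ≠ 0 := by
  classical
  set P : Polynomial K := X ^ (q + 1) - (X ^ 2 + C ζ) with hPdef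
  have hlt : (X ^ 2 + C ζ : Polynomial K).degree < ((q + 1 : ℕ) : WithBot ℕ) := by
    refine lt_of_le_of_lt (degree_add_le _ _) ?_
    rw [degree_X_pow]
    refine max_lt ?_ (lt_of_le_of_lt degree_C_le ?_)
    · exact_mod_cast by omega
    · exact_mod_cast by omega
  have hmon : P.Monic := monic_X_pow_sub hlt
  have hdeg : P.degree = ((q + 1 : ℕ) : WithBot ℕ) := by
    rw [hPdef, degree_sub_eq_left_of_degree_lt, degree_X_pow]
    rw [degree_X_pow]
    exact hlt
  have hev : ∀ α : K, P.eval α = α ^ (q + 1) - α ^ 2 - ζ := by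
    intro α; simp [hPdef]; ring
  by_contra hcon
  push_neg at hcon
  have hroot : ∀ α : K, P.eval α = 0 → α ^ q = 2 * α := by
    intro α h
    rw [hev] at h
    have hA : α ^ (q + 1) - α ^ 2 = ζ := by linear_combination h
    have := hcon α hA
    linear_combination this
  have hsq : ∀ α : K, P.eval α = 0 → α ^ 2 = ζ := by
    intro α h
    have h1 := hroot α h
    have hA : α ^ (q + 1) - α ^ 2 = ζ := by rw [hev] at h; linear_combination h
    have h2 : α ^ (q + 1) = 2 * α ^ 2 := by rw [pow_succ, h1]; ring
    linear_combination hA - h2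
  by_cases h2K : (2 : K) = 0
  · obtain ⟨α, hα⟩ := IsAlgClosed.exists_root P (by rw [hdeg]; exact_mod_cast Nat.succ_ne_zero q)
    have h1 := hroot α hα
    rw [h2K, zero_mul] at h1
    have hα0 : α = 0 := by
      have := pow_eq_zero_iff (n := q) (by omega) |>.mp h1
      exact this
    apply hζ0
    have := hsq α hα
    rw [hα0] at this
    simpa using this.symm
  · have hsp : P.Splits := IsAlgClosed.splits P
    have hnd : P.natDegree = q + 1 := natDegree_eq_of_degree_eq_some hdeg
    have hcard : P.roots.card = q + 1 := by
      rw [splits_iff_card_roots] at hsp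
      rw [hsp, hnd]
    obtain ⟨a, ha⟩ := Multiset.exists_mem_of_ne_zero
      (show P.roots ≠ 0 by intro h; rw [h] at hcard; simp at hcard)
    have haroot : P.eval a = 0 := (mem_roots'.mp ha).2
    have ha2 : a ^ 2 = ζ := hsq a haroot
    have ha0 : a ≠ 0 := by rintro rfl; apply hζ0; simpa using ha2.symm
    have hane : (a : K) ≠ -a := by
      intro h
      apply h2K
      have : 2 * a = 0 := by linear_combination h
      rcases mul_eq_zero.mp this with h' | h'
      · exact h'
      · exact absurd h' ha0
    -- split the roots multiset
    have hfil := Multiset.filter_add_not (· = a) P.roots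
    set i := P.roots.count a with hidef
    set j := Multiset.card (P.roots.filter (fun r => ¬ r = a)) with hjdef
    have h1 : P.roots.filter (· = a) = Multiset.replicate i a := Multiset.filter_eq' _ _
    have h2 : P.roots.filter (fun r => ¬ r = a) = Multiset.replicate j (-a) := by
      rw [Multiset.eq_replicate]
      refine ⟨rfl, fun b hb => ?_⟩
      have hbm := Multiset.mem_filter.mp hb
      have hb2 : b ^ 2 = ζ := hsq b (mem_roots'.mp hbm.1).2
      have : (b - a) * (b + a) = 0 := by linear_combination hb2 - ha2
      rcases mul_eq_zero.mp this with h' | h'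
      · exact absurd (by linear_combination h') hbm.2
      · linear_combination h'
    have hroots : P.roots = Multiset.replicate i a + Multiset.replicate j (-a) := by
      rw [← hfil, h1, h2]
    have hij : i + j = q + 1 := by
      have := congrArg Multiset.card hroots
      simp [hcard] at this
      omega
    have hfact : P = (X - C a) ^ i * (X - C (-a)) ^ j := by
      conv_lhs => rw [hsp.eq_prod_roots_of_monic hmon, hroots]
      simp [Multiset.map_replicate, Multiset.prod_replicate]
    have hderiv : derivative P = X ^ q - C 2 * X := by
      rw [hPdef]
      rw [derivative_sub, derivative_add, derivative_X_pow, derivative_X_pow, derivative_C]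
      simp [hqK, pow_one]
    have d1 : (X - C a) ^ (i - 1) ∣ derivative P := by
      rw [hfact]; exact pow_pred_dvd_deriv a i _
    have d2 : (X - C (-a)) ^ (j - 1) ∣ derivative P := by
      rw [hfact, mul_comm]; exact pow_pred_dvd_deriv (-a) j _
    have hcop : IsCoprime ((X - C a) ^ (i - 1)) ((X - C (-a)) ^ (j - 1)) := by
      apply IsCoprime.pow
      apply isCoprime_X_sub_C_of_isUnit_sub
      refine isUnit_iff_ne_zero.mpr ?_
      intro h
      exact hane (by linear_combination h)
    have hsf : Squarefree (derivative P) := by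
      apply Polynomial.Separable.squarefree
      unfold Polynomial.Separable
      have hdd : derivative (derivative P) = - C 2 := by
        rw [hderiv, derivative_sub, derivative_X_pow, derivative_mul, derivative_C, derivative_X]
        simp [hqK]
      rw [hdd]
      exact ⟨0, - C 2⁻¹, by rw [zero_mul, zero_add, neg_mul_neg, ← C_mul, inv_mul_cancel₀ h2K, C_1]⟩
    have hbound : ∀ (r : K) (m : ℕ), (X - C r) ^ m ∣ derivative P → m ≤ 1 := by
      intro r m hd
      by_contra h
      push_neg at h
      have hsq2 : (X - C r) * (X - C r) ∣ derivative P :=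
        dvd_trans (by rw [← sq]; exact pow_dvd_pow _ (by omega)) hd
      exact not_isUnit_X_sub_C r (hsf _ hsq2)
    have hi : i - 1 ≤ 1 := hbound a (i - 1) d1
    have hj : j - 1 ≤ 1 := hbound (-a) (j - 1) d2
    have hi2 : i ≤ 2 := by omega
    have hj2 : j ≤ 2 := by omega
    have hq3 : q = 3 ∧ i = 2 ∧ j = 2 := by
      have hq23 : q = 2 ∨ q = 3 := by omega
      rcases hq23 with h | h
      · exfalso; apply h2K; rw [h] at hqK; exact_mod_cast hqK
      · exact ⟨h, by omega, by omega⟩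
    obtain ⟨hq3', hi', hj'⟩ := hq3
    have := congrArg (Polynomial.eval 0) hfact
    rw [hev 0, hi', hj'] at this
    simp [zero_pow] at this
    -- this : -ζ = (0 - a)^2 * (0 - (-a))^2 or similar
    apply hζ1
    have hz2 : ζ * ζ = -ζ := by
      rw [← ha2] at this ⊢
      linear_combination -this
    have : ζ * (ζ + 1) = 0 := by linear_combination hz2
    rcases mul_eq_zero.mp this with h' | h'
    · exact absurd h' hζ0
    · linear_combination h'

lemma deriv_eval_eq_zero_of_sq_dvd {K : Type*} [CommRing K] {α : K} {c : Polynomial K}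
    (h : (X - C α) ^ 2 ∣ c) : c.derivative.eval α = 0 := by
  obtain ⟨u, rfl⟩ := h
  simp [derivative_mul, derivative_pow]

/-- For $n ≥ 1$ and $q ≡ 1 \pmod n$, the polynomial $Y^n - (X^n(X^q - X)^n + 1)$,
viewed as a polynomial in $Y$ over $K(X)$ for $K$ an algebraic closure of $F_q$,
is irreducible: the curve $y^n = x^n(x^q-x)^n + 1$ is geometrically irreducible. -/
theorem cyclic_cover_geometrically_irreducible {F : Type*} [Field F] [Fintype F]
    (n : ℕ) (hn : 1 ≤ n) (hmod : n ∣ Fintype.card F - 1)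
    (K : Type*) [Field K] [Algebra F K] [IsAlgClosure F K]
    (g : Polynomial (Polynomial K))
    (hg : g = Polynomial.X ^ n -
        Polynomial.C (Polynomial.X ^ n *
          (Polynomial.X ^ Fintype.card F - Polynomial.X) ^ n + 1)) :
    Irreducible (g.map (algebraMap (Polynomial K) (RatFunc K))) := by
  classical
  haveI hAC : IsAlgClosed K := IsAlgClosure.isAlgClosed F
  set q := Fintype.card F with hqdef
  have hq2 : 2 ≤ q := Fintype.one_lt_card
  have hqF : ((q : ℕ) : F) = 0 := FiniteField.cast_card_eq_zero F
  have hqK : ((q : ℕ) : K) = 0 := by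
    have := congrArg (algebraMap F K) hqF
    rwa [map_natCast, map_zero] at this
  have hnK : ((n : ℕ) : K) ≠ 0 := by
    intro h
    haveI hchar : CharP K (ringChar K) := ringChar.charP K
    have h1 : ringChar K ∣ n := (CharP.cast_eq_zero_iff K _ n).mp h
    have h2 : ringChar K ∣ q := (CharP.cast_eq_zero_iff K _ q).mp hqK
    have h3 : ringChar K ∣ q - 1 := h1.trans hmod
    have h4 : ringChar K ∣ 1 := by
      have := Nat.dvd_sub h2 h3
      rwa [Nat.sub_sub_self (by omega)] at this
    have h5 : ringChar K = 1 := Nat.dvd_one.mp h4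
    exact CharP.char_ne_one K (ringChar K) h5
  set c : Polynomial K := X ^ n * (X ^ q - X) ^ n + 1 with hcdef
  rcases eq_or_lt_of_le hn with h1 | h2
  · -- n = 1
    rw [hg, ← h1]
    simp only [pow_one, Polynomial.map_sub, Polynomial.map_X, Polynomial.map_C]
    exact irreducible_X_sub_C _
  · -- n ≥ 2
    obtain ⟨ζ, hζn, hζ1⟩ : ∃ ζ : K, ζ ^ n = -1 ∧ ζ ≠ -1 := by
      rcases Nat.even_or_odd n with he | ho
      · have h2K : (2 : K) ≠ 0 := by
          intro h2'
          obtain ⟨m, rfl⟩ := he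
          apply hnK
          have : ((m + m : ℕ) : K) = (m : K) * 2 := by push_cast; ring
          rw [this, h2', mul_zero]
        obtain ⟨ζ, hζ⟩ := IsAlgClosed.exists_root (X ^ n + C 1 : Polynomial K) (by
          rw [degree_X_pow_add_C (by omega : 0 < n)]
          exact_mod_cast by omega)
        have hζn : ζ ^ n = -1 := by
          have := hζ
          simp only [IsRoot, eval_add, eval_pow, eval_X, eval_C] at this
          linear_combination this
        refine ⟨ζ, hζn, ?_⟩
        rintro rfl
        rw [he.neg_one_pow] at hζn
        exact h2K (by linear_combination hζn)
      · have hGdeg : (∑ i ∈ Finset.range n, (X : Polynomial K) ^ i).degree ≠ 0 := by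
          intro h0
          have hm : (∑ i ∈ Finset.range n, (X : Polynomial K) ^ i) * (X - C 1)
              = X ^ n - C 1 := by simpa using geom_sum_mul (X : Polynomial K) n
          have := congrArg degree hm
          rw [degree_mul, h0, degree_X_sub_C, degree_X_pow_sub_C (by omega : 0 < n) 1] at this
          have : (1 : WithBot ℕ) = (n : ℕ) := by simpa using this
          have : (1 : ℕ) = n := by exact_mod_cast this
          omega
        obtain ⟨ω, hω⟩ := IsAlgClosed.exists_root _ hGdeg
        have hev : (∑ i ∈ Finset.range n, ω ^ i) = 0 := by
          have := hω
          simpa [IsRoot, eval_finset_sum] using this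
        have hωn : ω ^ n = 1 := by
          have h := geom_sum_mul ω n
          rw [hev, zero_mul] at h
          linear_combination -h
        have hω1 : ω ≠ 1 := by
          rintro rfl
          apply hnK
          simpa using hev
        exact ⟨-ω, by rw [ho.neg_pow, hωn], fun h => hω1 (neg_injective h)⟩
    have hζ0 : ζ ≠ 0 := by
      rintro rfl
      rw [zero_pow (by omega : n ≠ 0)] at hζn
      exact neg_ne_zero.mpr (one_ne_zero) hζn.symm
    obtain ⟨α, hα1, hα2⟩ := exists_good_root q hq2 hqK hζ0 hζ1
    have hcH : c = ((X : Polynomial K) ^ (q + 1) - X ^ 2) ^ n + 1 := by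
      rw [hcdef, ← mul_pow]
      ring_nf
    have hevH : ((X : Polynomial K) ^ (q + 1) - X ^ 2).eval α = ζ := by
      simpa using hα1
    have hevc : c.eval α = 0 := by
      rw [hcH]
      simp only [eval_add, eval_pow, eval_sub, eval_X, eval_one]
      rw [show α ^ (q+1) - α ^ 2 = ζ from hα1, hζn]
      ring
    have hd1 : derivative ((X : Polynomial K) ^ (q + 1) - X ^ 2) = X ^ q - C 2 * X := by
      rw [derivative_sub, derivative_X_pow, derivative_X_pow]
      simp [hqK]
    have hdc : derivative c = C ((n : K)) * ((X : Polynomial K) ^ (q + 1) - X ^ 2) ^ (n - 1)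
        * (X ^ q - C 2 * X) := by
      rw [hcH, derivative_add, derivative_one, derivative_pow, hd1, add_zero]
    have hevdc : (derivative c).eval α ≠ 0 := by
      rw [hdc]
      simp only [eval_mul, eval_pow, eval_sub, eval_X, eval_C]
      refine mul_ne_zero (mul_ne_zero hnK ?_) ?_
      · rw [show α ^ (q+1) - α ^ 2 = ζ from hα1]
        exact pow_ne_zero _ hζ0
      · simpa using hα2
    -- Eisenstein
    have hmg : g.Monic := by rw [hg]; exact monic_X_pow_sub_C _ (by omega)
    have hdeg' : g.degree = (n : ℕ) := by rw [hg]; exact degree_X_pow_sub_C (by omega) _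
    have hPprime : (Ideal.span {(X - C α : Polynomial K)}).IsPrime :=
      (Ideal.span_singleton_prime (X_sub_C_ne_zero α)).mpr (prime_X_sub_C α)
    have hcoeff0 : g.coeff 0 = -c := by
      rw [hg, coeff_sub, coeff_X_pow, if_neg (by omega : ¬ (0:ℕ) = n), coeff_C_zero, zero_sub]
    have hirr : Irreducible g := by
      apply irreducible_of_eisenstein_criterion hPprime
      · rw [Monic.leadingCoeff hmg]
        intro hmem
        exact not_isUnit_X_sub_C α (isUnit_of_dvd_one (Ideal.mem_span_singleton.mp hmem))
      · intro m hm
        rw [hdeg'] at hm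
        have hmn : m < n := by exact_mod_cast hm
        by_cases hm0 : m = 0
        · subst hm0
          rw [hcoeff0]
          rw [Ideal.mem_span_singleton, dvd_neg]
          exact dvd_iff_isRoot.mpr hevc
        · rw [hg, coeff_sub, coeff_X_pow, if_neg (by omega : ¬ m = n), coeff_C, if_neg hm0]
          simp
      · rw [hdeg']
        exact_mod_cast by omega
      · rw [hcoeff0]
        intro hmem
        rw [Ideal.span_singleton_pow, Ideal.mem_span_singleton, dvd_neg] at hmem
        exact hevdc (deriv_eval_eq_zero_of_sq_dvd hmem)
      · exact hmg.isPrimitive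
    exact (hmg.irreducible_iff_irreducible_map_fraction_map).mp hirr
end

section
/- Let n ≥ 1 be an integer and let q be a prime power with q ≡ 1 (mod n) such that q is neither a power of 3 nor a power of 5. Then the polynomials X^{2n} + 1 and X^{q−1} − 2 are coprime in F_q[X]; equivalently, there is no element ρ in an algebraic closure of F_q with ρ^{2n} = −1 and ρ^{q−1} = 2. (Consequently the curve y^n = x^n(x^q − x)^n + 1 over F_q is nonsingular.) -/
open Polynomial

/-- If $q ≡ 1 \pmod n$ and $q$ is neither a power of 3 nor a power of 5, then
$X^{2n} + 1$ and $X^{q-1} - 2$ are coprime in $F_q[X]$ (so the curve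
$y^n = x^n(x^q-x)^n + 1$ is nonsingular). -/
theorem cyclic_cover_nonsingular {F : Type*} [Field F] [Fintype F]
    (n : ℕ) (hn : 1 ≤ n) (hmod : n ∣ Fintype.card F - 1)
    (h3 : ∀ k : ℕ, Fintype.card F ≠ 3 ^ k)
    (h5 : ∀ k : ℕ, Fintype.card F ≠ 5 ^ k) :
    IsCoprime (Polynomial.X ^ (2 * n) + 1 : Polynomial F)
      (Polynomial.X ^ (Fintype.card F - 1) - Polynomial.C 2) := by
  classical
  set q := Fintype.card F with hq
  obtain ⟨k, hk⟩ := hmod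
  -- 15 ≠ 0 in F
  have h15 : (15 : F) ≠ 0 := by
    intro h
    set p := ringChar F with hp
    have hpprime : p.Prime := CharP.char_is_prime F p
    have hdvd : p ∣ 15 := (CharP.cast_eq_zero_iff F p 15).mp (by exact_mod_cast h)
    obtain ⟨m, hm⟩ := FiniteField.card F p
    rw [← hq] at hm
    have h2 := hpprime.two_le
    have hle := Nat.le_of_dvd (by norm_num) hdvd
    interval_cases p <;> first
      | exact absurd hdvd (by decide)
      | exact absurd hpprime (by decide)
      | exact h3 m hm.2
      | exact h5 m hm.2
  -- divisibility facts
  have d1 : (X ^ (2 * n) + 1 : F[X]) ∣ X ^ (4 * (q - 1)) - 1 := by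
    have e1 : (X ^ (2 * n) + 1 : F[X]) ∣ X ^ (4 * n) - 1 :=
      ⟨X ^ (2 * n) - 1, by
        rw [show 4 * n = 2 * n + 2 * n from by ring, pow_add]; ring⟩
    have e2 : (X ^ (4 * n) - 1 : F[X]) ∣ X ^ (4 * (q - 1)) - 1 := by
      have := sub_dvd_pow_sub_pow (X ^ (4 * n) : F[X]) 1 k
      simpa [← pow_mul, hk, mul_assoc, one_pow] using this
    exact e1.trans e2
  have d2 : (X ^ (q - 1) - C 2 : F[X]) ∣ X ^ (4 * (q - 1)) - C 16 := by
    have := sub_dvd_pow_sub_pow (X ^ (q - 1) : F[X]) (C 2) 4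
    have h16 : ((C 2 : F[X]) ^ 4) = C 16 := by
      rw [← C_pow]; norm_num
    simpa [← pow_mul, mul_comm, h16] using this
  obtain ⟨a, ha⟩ := d1
  obtain ⟨b, hb⟩ := d2
  refine ⟨C (15 : F)⁻¹ * a, -(C (15 : F)⁻¹ * b), ?_⟩
  have key : a * (X ^ (2 * n) + 1) - b * (X ^ (q - 1) - C 2) = C 15 := by
    rw [mul_comm a, mul_comm b, ← ha, ← hb]
    rw [show (15 : F) = 16 - 1 by norm_num, C_sub]
    simp
  calc C (15 : F)⁻¹ * a * (X ^ (2 * n) + 1) +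
        -(C (15 : F)⁻¹ * b) * (X ^ (q - 1) - C 2)
      = C (15 : F)⁻¹ * (a * (X ^ (2 * n) + 1) - b * (X ^ (q - 1) - C 2)) := by ring
    _ = C (15 : F)⁻¹ * C 15 := by rw [key]
    _ = 1 := by rw [← C_mul, inv_mul_cancel₀ h15, C_1]
end
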